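/- arXiv:1501.04714 — 4 statements merged into one kernel-verified Lean document; each statement's English description precedes it below -/
import Mathlib

section
/- Let ψ be positive non-increasing, θ irrational with convergent denominators q_k, and suppose ψ(q_{k+1}−1) ≥ ‖q_k θ‖ for infinitely many k. Then ∑_{k≥0} ∑_{n=q_k}^{q_{k+1}-1} min(ψ(n), ‖q_k θ‖) = ∞; in fact for each such k ≥ 1, ∑_{n=q_{k-1}}^{q_{k+1}-1} min(ψ(n), ‖q_{k-1 or k} θ‖) ≥ 1/4 (taking ‖q_{k-1}θ‖ for n < q_k and ‖q_kθ‖ for n ≥ q_k). -/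
open MeasureTheory Filter
open scoped ENNReal Classical

/-- Distance from a real number to the nearest integer. -/
noncomputable def distNearestInt (x : ℝ) : ℝ := |x - round x|

section AuxCF

open GenContFract

noncomputable def frAux (θ : ℝ) (n : ℕ) : ℝ :=
  ((GenContFract.IntFractPair.stream θ n).map GenContFract.IntFractPair.fr).getD 0

theorem frAux_eq {θ : ℝ} {n : ℕ} {ifp : IntFractPair ℝ}
    (h : IntFractPair.stream θ n = some ifp) : frAux θ n = ifp.fr := by
  simp [frAux, h]

theorem notTerm {θ : ℝ} (hθ : Irrational θ) (n : ℕ) :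
    ¬(GenContFract.of θ).TerminatedAt n := fun h => by
  obtain ⟨q, hq⟩ := terminates_iff_rat θ |>.mp ⟨n, h⟩
  exact hθ ⟨q, hq.symm⟩

theorem streamSome {θ : ℝ} (hθ : Irrational θ) (n : ℕ) :
    ∃ ifp, IntFractPair.stream θ n = some ifp ∧ 0 < ifp.fr ∧ ifp.fr < 1 := by
  have h1 : IntFractPair.stream θ (n+1) ≠ none := by
    intro h
    exact notTerm hθ n (of_terminatedAt_n_iff_succ_nth_intFractPair_stream_eq_none.mpr h)
  obtain ⟨ifp1, h1⟩ := Option.ne_none_iff_exists'.mp h1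
  obtain ⟨ifp, hn, hfr, -⟩ := IntFractPair.succ_nth_stream_eq_some_iff.mp h1
  obtain ⟨h0, h1'⟩ := IntFractPair.nth_stream_fr_nonneg_lt_one hn
  exact ⟨ifp, hn, lt_of_le_of_ne h0 (Ne.symm hfr), h1'⟩

theorem frAux_pos {θ : ℝ} (hθ : Irrational θ) (n : ℕ) :
    0 < frAux θ n ∧ frAux θ n < 1 := by
  obtain ⟨ifp, hn, h0, h1⟩ := streamSome hθ n
  rw [frAux_eq hn]; exact ⟨h0, h1⟩

theorem bAux {θ : ℝ} (hθ : Irrational θ) (n : ℕ) :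
    ∃ b : ℤ, (GenContFract.of θ).s.get? n = some ⟨1, (b : ℝ)⟩ ∧ 1 ≤ b ∧
      (frAux θ n)⁻¹ = b + frAux θ (n + 1) := by
  obtain ⟨ifp, hn, h0, h1⟩ := streamSome hθ n
  have hsucc : IntFractPair.stream θ (n + 1) = some (IntFractPair.of ifp.fr⁻¹) :=
    IntFractPair.stream_succ_of_some hn h0.ne'
  refine ⟨⌊ifp.fr⁻¹⌋, ?_, ?_, ?_⟩
  · exact get?_of_eq_some_of_succ_get?_intFractPair_stream hsucc
  · exact Int.le_floor.mpr (by exact_mod_cast (one_le_inv_iff₀.mpr ⟨h0, h1.le⟩))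
  · rw [frAux_eq hn, frAux_eq hsucc]
    exact (Int.floor_add_fract _).symm

theorem dens_ge_one {θ : ℝ} (n : ℕ) : 1 ≤ (GenContFract.of θ).dens n := by
  induction n with
  | zero => simp [zeroth_den_eq_one]
  | succ n ih => exact ih.trans (of_den_mono)

theorem densMono {θ : ℝ} : Monotone ((GenContFract.of θ).dens) :=
  monotone_nat_of_le_succ fun _ => of_den_mono

theorem contsAux_b_eq {θ : ℝ} (n : ℕ) :
    ((GenContFract.of θ).contsAux (n + 1)).b = (GenContFract.of θ).dens n := by
  rw [den_eq_conts_b, nth_cont_eq_succ_nth_contAux]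

theorem densStep {θ : ℝ} (hθ : Irrational θ) (n : ℕ) :
    ∃ b : ℤ, 1 ≤ b ∧ (frAux θ n)⁻¹ = b + frAux θ (n + 1) ∧
      (GenContFract.of θ).dens (n + 1) =
        b * (GenContFract.of θ).dens n + ((GenContFract.of θ).contsAux n).b := by
  obtain ⟨b, hs, hb, hfr⟩ := bAux hθ n
  refine ⟨b, hb, hfr, ?_⟩
  have h := contsAux_recurrence (g := GenContFract.of θ) hs rfl rfl
  have h2 : ((GenContFract.of θ).contsAux (n + 2)).b
      = (b : ℝ) * ((GenContFract.of θ).contsAux (n+1)).b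
        + 1 * ((GenContFract.of θ).contsAux n).b := by
    rw [h]
  rw [← contsAux_b_eq (n+1), h2, contsAux_b_eq, one_mul]

noncomputable def Eterm (θ : ℝ) (n : ℕ) : ℝ :=
  ((GenContFract.of θ).dens (n + 1) + frAux θ (n + 1) * (GenContFract.of θ).dens n)⁻¹

theorem contsAux_b_nonneg {θ : ℝ} (n : ℕ) : 0 ≤ ((GenContFract.of θ).contsAux n).b := by
  cases n with
  | zero => simp [contsAux]
  | succ n => rw [contsAux_b_eq]; exact (zero_le_one.trans (dens_ge_one n))

theorem keyIdent {θ : ℝ} (hθ : Irrational θ) (n : ℕ) :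
    (frAux θ n)⁻¹ * (GenContFract.of θ).dens n + ((GenContFract.of θ).contsAux n).b
      = (GenContFract.of θ).dens (n + 1) + frAux θ (n + 1) * (GenContFract.of θ).dens n := by
  obtain ⟨b, hb, hfr, hrec⟩ := densStep hθ n
  rw [hfr, hrec]; ring

theorem Eterm_pos {θ : ℝ} (hθ : Irrational θ) (n : ℕ) : 0 < Eterm θ n := by
  have h1 := dens_ge_one (θ := θ) (n + 1)
  have h2 := dens_ge_one (θ := θ) n
  have h3 := (frAux_pos hθ (n + 1)).1
  have : 0 < (GenContFract.of θ).dens (n + 1) + frAux θ (n + 1) * (GenContFract.of θ).dens n := by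
    nlinarith
  exact inv_pos.mpr this

theorem dens_add {θ : ℝ} (hθ : Irrational θ) (n : ℕ) :
    (GenContFract.of θ).dens (n + 1) + (GenContFract.of θ).dens n
      ≤ (GenContFract.of θ).dens (n + 2) := by
  obtain ⟨b, hs, hb, -⟩ := bAux hθ (n + 1)
  have h := dens_recurrence (g := GenContFract.of θ) hs rfl rfl
  have hb' : (1 : ℝ) ≤ (b : ℝ) := by exact_mod_cast hb
  have h1 := dens_ge_one (θ := θ) (n + 1)
  rw [h]; simp only [one_mul]; nlinarith

theorem Eterm_mono {θ : ℝ} (hθ : Irrational θ) (n : ℕ) : Eterm θ (n + 1) ≤ Eterm θ n := by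
  have h1 := dens_ge_one (θ := θ) n
  have h2 := dens_ge_one (θ := θ) (n + 1)
  have h3 := frAux_pos hθ (n + 1)
  have h4 := frAux_pos hθ (n + 2)
  have hadd := dens_add hθ n
  have hm := densMono (θ := θ) (Nat.le_succ (n+1))
  unfold Eterm
  apply inv_anti₀ (by nlinarith)
  nlinarith

theorem numInt {θ : ℝ} (hθ : Irrational θ) (n : ℕ) :
    ∃ P : ℤ, (GenContFract.of θ).nums n = (P : ℝ) := by
  suffices h : ∀ m, (∃ P : ℤ, (GenContFract.of θ).nums m = (P : ℝ)) ∧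
      (∃ P : ℤ, (GenContFract.of θ).nums (m+1) = (P : ℝ)) from (h n).1
  intro m
  induction m with
  | zero =>
    constructor
    · exact ⟨⌊θ⌋, by rw [zeroth_num_eq_h, of_h_eq_floor]⟩
    · obtain ⟨b, hs, -, -⟩ := bAux hθ 0
      exact ⟨b * ⌊θ⌋ + 1, by rw [first_num_eq hs, of_h_eq_floor]; push_cast; ring⟩
  | succ m ih =>
    obtain ⟨⟨P, hP⟩, Q, hQ⟩ := ih
    refine ⟨⟨Q, hQ⟩, ?_⟩
    obtain ⟨b, hs, -, -⟩ := bAux hθ (m + 1)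
    refine ⟨b * Q + P, ?_⟩
    rw [nums_recurrence hs hP hQ]; push_cast; ring

theorem errAbs {θ : ℝ} (hθ : Irrational θ) (n : ℕ) :
    ∃ P : ℤ, |(GenContFract.of θ).dens n * θ - (P : ℝ)| = Eterm θ n := by
  obtain ⟨ifp, hn, h0, h1⟩ := streamSome hθ n
  obtain ⟨P, hP⟩ := numInt hθ n
  have hsub := sub_convs_eq hn
  simp only [h0.ne', if_false] at hsub
  have hBd : ((GenContFract.of θ).contsAux (n+1)).b = (GenContFract.of θ).dens n :=
    contsAux_b_eq n
  rw [hBd] at hsub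
  have hdpos : (0:ℝ) < (GenContFract.of θ).dens n := lt_of_lt_of_le one_pos (dens_ge_one n)
  have hX : ifp.fr⁻¹ * (GenContFract.of θ).dens n + ((GenContFract.of θ).contsAux n).b
      = (Eterm θ n)⁻¹ := by
    rw [← frAux_eq hn, keyIdent hθ n, Eterm, inv_inv]
  have hXpos : (0:ℝ) < (Eterm θ n)⁻¹ := inv_pos.mpr (Eterm_pos hθ n)
  refine ⟨P, ?_⟩
  have hconv : (GenContFract.of θ).convs n
      = (GenContFract.of θ).nums n / (GenContFract.of θ).dens n := conv_eq_num_div_den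
  have : (GenContFract.of θ).dens n * θ - (P:ℝ)
      = (GenContFract.of θ).dens n * (θ - (GenContFract.of θ).convs n) := by
    rw [hconv, hP]; field_simp
  rw [this, hsub, hX]
  rw [abs_mul, abs_div, abs_mul]
  rw [abs_of_pos hdpos, abs_of_pos hXpos, abs_pow, abs_neg, abs_one, one_pow]
  rw [Eterm, inv_inv]
  rw [one_div, mul_inv, mul_comm (((GenContFract.of θ).dens n)⁻¹)]
  rw [mul_comm _ (((GenContFract.of θ).dens n)⁻¹), ← mul_assoc,
    mul_inv_cancel₀ hdpos.ne', one_mul]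

theorem distNearestInt_le (x : ℝ) (P : ℤ) : distNearestInt x ≤ |x - P| := round_le x P

theorem distNearestInt_eq_of {x : ℝ} {P : ℤ} (h : |x - (P:ℝ)| ≤ 1/2) :
    distNearestInt x = |x - P| := by
  refine le_antisymm (distNearestInt_le x P) ?_
  rcases eq_or_ne P (round x) with rfl | hne
  · exact le_refl _
  · have h1 : (1:ℝ) ≤ |(P:ℝ) - round x| := by
      rw [← Int.cast_sub]
      exact_mod_cast Int.one_le_abs (sub_ne_zero.mpr hne)
    have h2 : |x - round x| ≤ 1/2 := abs_sub_round x
    have : |(P:ℝ) - round x| ≤ |x - P| + |x - round x| := by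
      calc |(P:ℝ) - round x| ≤ |(P:ℝ) - x| + |x - round x| := abs_sub_le _ _ _
        _ = |x - P| + |x - round x| := by rw [abs_sub_comm]
    unfold distNearestInt
    linarith

theorem dens_two_le {θ : ℝ} (hθ : Irrational θ) (n : ℕ) :
    2 ≤ (GenContFract.of θ).dens (n + 2) := by
  have := dens_add hθ n
  have := dens_ge_one (θ := θ) n
  have := dens_ge_one (θ := θ) (n+1)
  linarith

theorem Eterm_le_half {θ : ℝ} (hθ : Irrational θ) (n : ℕ) : Eterm θ (n + 1) ≤ 1/2 := by
  have h2 := dens_two_le hθ n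
  have h3 := (frAux_pos hθ (n + 2)).1
  have h4 := dens_ge_one (θ := θ) (n + 1)
  rw [Eterm, ← one_div]
  apply div_le_div_of_nonneg_left one_pos.le two_pos ?_ |>.trans_eq' rfl
  nlinarith

theorem distEq {θ : ℝ} (hθ : Irrational θ) (n : ℕ) :
    distNearestInt ((GenContFract.of θ).dens (n + 1) * θ) = Eterm θ (n + 1) := by
  obtain ⟨P, hP⟩ := errAbs hθ (n + 1)
  rw [distNearestInt_eq_of (hP.trans_le (Eterm_le_half hθ n)), hP]

theorem frAux_zero (θ : ℝ) : frAux θ 0 = Int.fract θ := by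
  rw [frAux_eq (IntFractPair.stream_zero θ)]
  rfl

theorem Eterm_zero {θ : ℝ} (hθ : Irrational θ) : Eterm θ 0 = Int.fract θ := by
  have h := keyIdent hθ 0
  have h0 : ((GenContFract.of θ).contsAux 0).b = 0 := rfl
  have h1 : (GenContFract.of θ).dens 0 = 1 := zeroth_den_eq_one
  rw [h0, h1, mul_one, add_zero, frAux_zero] at h
  rw [Eterm, h1, ← h, inv_inv]

theorem aux_ineq {a t : ℝ} (ha : 1 ≤ a) (ht : 0 < t) (ht1 : t < 1) :
    (t⁻¹ * a + 1)⁻¹ ≤ 1 - (a + t)⁻¹ := by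
  have hat : 0 < a + t := by linarith
  have h : t⁻¹ * a + 1 = (a + t) / t := by field_simp
  rw [h, inv_div, div_le_iff₀ hat, sub_mul, one_mul, inv_mul_cancel₀ hat.ne']
  linarith

theorem distLower {θ : ℝ} (hθ : Irrational θ) (n : ℕ) :
    Eterm θ (n + 1) ≤ distNearestInt ((GenContFract.of θ).dens n * θ) := by
  cases n with
  | succ m => rw [distEq hθ m]; exact Eterm_mono hθ (m + 1)
  | zero =>
    rw [zeroth_den_eq_one, one_mul]
    have hmin : distNearestInt θ = min (Int.fract θ) (1 - Int.fract θ) :=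
      abs_sub_round_eq_min θ
    rw [hmin, le_min_iff]
    constructor
    · rw [← Eterm_zero hθ]; exact Eterm_mono hθ 0
    · have hkey := keyIdent hθ 1
      rw [contsAux_b_eq 0, zeroth_den_eq_one] at hkey
      have hE1 : Eterm θ 1 = ((frAux θ 1)⁻¹ * (GenContFract.of θ).dens 1 + 1)⁻¹ := by
        rw [Eterm, ← hkey]
      have hfr : Int.fract θ = ((GenContFract.of θ).dens 1 + frAux θ 1)⁻¹ := by
        rw [← Eterm_zero hθ, Eterm, zeroth_den_eq_one, mul_one]
      rw [hE1, hfr]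
      exact aux_ineq (dens_ge_one 1) (frAux_pos hθ 1).1 (frAux_pos hθ 1).2

end AuxCF

theorem large_psi_case_divergence
    (θ : ℝ) (hθ : Irrational θ) (q : ℕ → ℕ)
    (hq : ∀ k, (q k : ℝ) = (GenContFract.of θ).dens k)
    (ψ : ℕ → ℝ) (hψpos : ∀ n, 0 < ψ n) (hψmono : ∀ m n, m ≤ n → ψ n ≤ ψ m)
    (hinf : {k : ℕ | distNearestInt ((q k : ℝ) * θ) ≤ ψ (q (k + 1) - 1)}.Infinite) :
    (¬ Summable fun k =>
      ∑ n ∈ Finset.Ico (q k) (q (k + 1)), min (ψ n) (distNearestInt ((q k : ℝ) * θ))) ∧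
    ∀ k : ℕ, 1 ≤ k → distNearestInt ((q k : ℝ) * θ) ≤ ψ (q (k + 1) - 1) →
      1 / 4 ≤
        (∑ n ∈ Finset.Ico (q (k - 1)) (q k), min (ψ n) (distNearestInt ((q (k - 1) : ℝ) * θ))) +
        ∑ n ∈ Finset.Ico (q k) (q (k + 1)), min (ψ n) (distNearestInt ((q k : ℝ) * θ)) := by
  set S : ℕ → ℝ := fun k =>
    ∑ n ∈ Finset.Ico (q k) (q (k + 1)), min (ψ n) (distNearestInt ((q k : ℝ) * θ)) with hS
  have hqmono : Monotone q := fun i j hij => by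
    have := densMono (θ := θ) hij
    rw [← hq, ← hq] at this
    exact_mod_cast this
  have hq1 : ∀ j, 1 ≤ q j := fun j => by
    have := dens_ge_one (θ := θ) j
    rw [← hq] at this
    exact_mod_cast this
  -- Part 2 first
  have key : ∀ k : ℕ, 1 ≤ k → distNearestInt ((q k : ℝ) * θ) ≤ ψ (q (k + 1) - 1) →
      1 / 4 ≤ S (k - 1) + S k := by
    intro k hk hhyp
    obtain ⟨m, rfl⟩ : ∃ m, k = m + 1 := ⟨k - 1, by omega⟩
    set k := m + 1 with hkdef
    have hk1 : k = m + 1 := rfl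
    have hkm : k - 1 = m := by omega
    have hdist : distNearestInt ((q k : ℝ) * θ) = Eterm θ k := by
      rw [hq, hk1]; exact distEq hθ m
    have hEpos : 0 < Eterm θ k := Eterm_pos hθ k
    have hprev : Eterm θ k ≤ distNearestInt ((q m : ℝ) * θ) := by
      rw [hq, hk1]; exact distLower hθ m
    have hψE : ∀ n : ℕ, n < q (k + 1) → Eterm θ k ≤ ψ n := by
      intro n hn
      have h1 : n ≤ q (k + 1) - 1 := Nat.le_sub_one_of_lt hn
      have := hψmono n (q (k + 1) - 1) h1
      rw [hdist] at hhyp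
      linarith
    -- bound the two sums
    have hsum1 : (↑(q k - q m) : ℝ) * Eterm θ k ≤ S m := by
      rw [hS]
      have := Finset.card_nsmul_le_sum (Finset.Ico (q m) (q k))
        (fun n => min (ψ n) (distNearestInt ((q m : ℝ) * θ))) (Eterm θ k) ?_
      · simpa [Nat.card_Ico, nsmul_eq_mul, hkm] using this
      · intro n hn
        rw [Finset.mem_Ico] at hn
        refine le_min (hψE n ?_) hprev
        exact lt_of_lt_of_le hn.2 (hqmono (Nat.le_succ k))
    have hsum2 : (↑(q (k + 1) - q k) : ℝ) * Eterm θ k ≤ S k := by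
      rw [hS]
      have := Finset.card_nsmul_le_sum (Finset.Ico (q k) (q (k + 1)))
        (fun n => min (ψ n) (distNearestInt ((q k : ℝ) * θ))) (Eterm θ k) ?_
      · simpa [Nat.card_Ico, nsmul_eq_mul] using this
      · intro n hn
        rw [Finset.mem_Ico] at hn
        exact le_min (hψE n hn.2) hdist.ge
    have hc1 : (↑(q k - q m) : ℝ) = (q k : ℝ) - (q m : ℝ) := by
      rw [Nat.cast_sub (hqmono (by omega : m ≤ k))]
    have hc2 : (↑(q (k + 1) - q k) : ℝ) = (q (k + 1) : ℝ) - (q k : ℝ) := by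
      rw [Nat.cast_sub (hqmono (Nat.le_succ k))]
    -- the quantitative bound
    set A := (q (k + 1) : ℝ)
    set B := (q k : ℝ)
    set C := (q m : ℝ)
    have hA : A = (GenContFract.of θ).dens (k + 1) := hq _
    have hB : B = (GenContFract.of θ).dens k := hq _
    have hC : C = (GenContFract.of θ).dens m := hq _
    have hABC : B + C ≤ A := by
      rw [hA, hB, hC, hk1]
      exact dens_add hθ m
    have hBC : C ≤ B := by
      rw [hB, hC]
      exact densMono (by omega : m ≤ k)
    have hC1 : (1:ℝ) ≤ C := by rw [hC]; exact dens_ge_one m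
    have hfr := frAux_pos hθ (k + 1)
    have hEeq : Eterm θ k = (A + frAux θ (k + 1) * B)⁻¹ := by
      rw [Eterm, hA, hB]
    have hABpos : (0:ℝ) < A + B := by nlinarith
    have hE_lb : (A + B)⁻¹ ≤ Eterm θ k := by
      rw [hEeq]
      apply inv_anti₀ (by nlinarith)
      nlinarith
    have hquarter : 1 / 4 ≤ (A - C) * Eterm θ k := by
      have h1 : 1 / 4 ≤ (A - C) * (A + B)⁻¹ := by
        rw [← div_eq_mul_inv, le_div_iff₀ hABpos]
        nlinarith
      have h2 : (A - C) * (A + B)⁻¹ ≤ (A - C) * Eterm θ k :=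
        mul_le_mul_of_nonneg_left hE_lb (by nlinarith)
      linarith
    have : (A - C) * Eterm θ k ≤ S m + S k := by
      have : (A - C) * Eterm θ k = ((B - C) + (A - B)) * Eterm θ k := by ring
      rw [this, add_mul]
      rw [hc1] at hsum1
      rw [hc2] at hsum2
      exact add_le_add hsum1 hsum2
    rw [hkm]
    linarith
  have hpart2 : ∀ k : ℕ, 1 ≤ k → distNearestInt ((q k : ℝ) * θ) ≤ ψ (q (k + 1) - 1) →
      1 / 4 ≤
        (∑ n ∈ Finset.Ico (q (k - 1)) (q k), min (ψ n) (distNearestInt ((q (k - 1) : ℝ) * θ))) +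
        ∑ n ∈ Finset.Ico (q k) (q (k + 1)), min (ψ n) (distNearestInt ((q k : ℝ) * θ)) := by
    intro k hk hh
    have h := key k hk hh
    have hk' : k - 1 + 1 = k := by omega
    rw [hS] at h
    simp only at h
    rw [hk'] at h
    exact h
  refine ⟨?_, hpart2⟩
  intro hSummable
  have hSnonneg : ∀ k, 0 ≤ S k := by
    intro k
    apply Finset.sum_nonneg
    intro n _
    exact le_min (hψpos n).le (abs_nonneg _)
  have h0 : Tendsto S atTop (nhds 0) := hSummable.tendsto_atTop_zero
  have hpair : Tendsto (fun j => S j + S (j + 1)) atTop (nhds 0) := by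
    have h1 : Tendsto (fun j => S (j + 1)) atTop (nhds 0) :=
      h0.comp (tendsto_add_atTop_nat 1)
    simpa using h0.add h1
  have hev : ∀ᶠ j in atTop, S j + S (j + 1) < 1 / 4 :=
    hpair.eventually_lt_const (by norm_num)
  obtain ⟨N, hN⟩ := eventually_atTop.mp hev
  obtain ⟨k, hkmem, hkgt⟩ := hinf.exists_gt N
  have hk1 : 1 ≤ k := by omega
  have := key k hk1 hkmem
  have h2 := hN (k - 1) (by omega)
  rw [show k - 1 + 1 = k by omega] at h2
  linarith
end

section
/- Let φ : ℕ → ℝ be positive, non-decreasing, and bounded (say φ(n) ≤ c with c ≥ 2), and θ irrational with convergent denominators q_k. Then ∑_{k≥0} ∑_{n=q_k}^{q_{k+1}-1} min(1/(n·φ(n)), ‖q_k θ‖) = ∞. -/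
open MeasureTheory Filter
open scoped ENNReal Classical

theorem bounded_phi_divergence
    (θ : ℝ) (hθ : Irrational θ) (q : ℕ → ℕ)
    (hq : ∀ k, (q k : ℝ) = (GenContFract.of θ).dens k)
    (φ : ℕ → ℝ) (hφpos : ∀ n, 0 < φ n) (hφmono : ∀ m n, m ≤ n → φ m ≤ φ n)
    (c : ℝ) (hc : 2 ≤ c) (hφbdd : ∀ n, φ n ≤ c) :
    ¬ Summable fun k =>
      ∑ n ∈ Finset.Ico (q k) (q (k + 1)),
        min (1 / ((n : ℝ) * φ n)) (distNearestInt ((q k : ℝ) * θ)) := by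
  intro hsum
  set g := GenContFract.of θ with hg
  set f : ℕ → ℝ := fun k =>
      ∑ n ∈ Finset.Ico (q k) (q (k + 1)),
        min (1 / ((n : ℝ) * φ n)) (distNearestInt ((q k : ℝ) * θ)) with hf
  have hc0 : (0:ℝ) < c := lt_of_lt_of_le two_pos hc
  -- θ irrational, so the continued fraction never terminates
  have hnt : ∀ n, ¬g.TerminatedAt n := by
    intro n hn
    have ht : g.Terminates := ⟨n, hn⟩
    rw [hg, GenContFract.terminates_iff_rat] at ht
    obtain ⟨r, hr⟩ := ht
    exact hθ ⟨r, hr.symm⟩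
  have hs : ∀ n, ∃ gp, g.s.get? n = some gp := fun n =>
    Option.ne_none_iff_exists'.mp (hnt n)
  -- basic facts about q
  have hq0 : q 0 = 1 := by
    have h := hq 0
    rw [GenContFract.zeroth_den_eq_one] at h
    exact_mod_cast h
  have hmono : ∀ k, q k ≤ q (k+1) := by
    intro k
    have h : g.dens k ≤ g.dens (k+1) := GenContFract.of_den_mono
    rw [← hq, ← hq] at h
    exact_mod_cast h
  have hmono' : ∀ i j, i ≤ j → q i ≤ q j := by
    intro i j hij
    induction j with
    | zero => simpa [Nat.le_zero.mp hij]
    | succ n ih =>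
      rcases Nat.lt_or_ge i (n+1) with h | h
      · exact le_trans (ih (by omega)) (hmono n)
      · have : i = n+1 := by omega
        simp [this]
  have hq1 : ∀ k, 1 ≤ q k := by
    intro k
    have := hmono' 0 k (Nat.zero_le k)
    omega
  have hqpos : ∀ k, (0:ℝ) < q k := fun k => by exact_mod_cast hq1 k
  -- recurrence inequality q(k+2) ≥ q(k+1) + q k
  have hrec : ∀ k, q (k+1) + q k ≤ q (k+2) := by
    intro k
    obtain ⟨gp, hgp⟩ := hs (k+1)
    have hb : (1:ℝ) ≤ gp.b :=
      GenContFract.of_one_le_get?_partDen (GenContFract.partDen_eq_s_b hgp)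
    have ha : gp.a = 1 :=
      GenContFract.of_partNum_eq_one (GenContFract.partNum_eq_s_a hgp)
    have hd : g.dens (k+2) = gp.b * g.dens (k+1) + gp.a * g.dens k :=
      GenContFract.dens_recurrence hgp rfl rfl
    rw [ha, one_mul] at hd
    have hle : (q (k+1) : ℝ) + q k ≤ (q (k+2) : ℝ) := by
      rw [hq, hq, hq, hd]
      nlinarith [hqpos (k+1), hqpos k, hq (k+1), hq k]
    exact_mod_cast hle
  have hq2 : ∀ k, 1 ≤ k → 2 ≤ q (k+1) := by
    intro k hk
    have h2 : 2 ≤ q 2 := by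
      have ha : q 1 + q 0 ≤ q 2 := hrec 0
      have hb := hq1 1
      omega
    exact le_trans h2 (hmono' 2 (k+1) (by omega))
  -- integrality of numerators
  have hint : ∀ n, ∃ z : ℤ, g.nums n = (z:ℝ) := by
    have h0 : ∃ z : ℤ, g.nums 0 = (z:ℝ) :=
      ⟨⌊θ⌋, by rw [GenContFract.zeroth_num_eq_h, hg, GenContFract.of_h_eq_floor]⟩
    have h1 : ∃ z : ℤ, g.nums 1 = (z:ℝ) := by
      obtain ⟨gp, hgp⟩ := hs 0
      obtain ⟨z, hz⟩ := GenContFract.exists_int_eq_of_partDen (GenContFract.partDen_eq_s_b hgp)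
      have ha : gp.a = 1 :=
        GenContFract.of_partNum_eq_one (GenContFract.partNum_eq_s_a hgp)
      refine ⟨z * ⌊θ⌋ + 1, ?_⟩
      rw [GenContFract.first_num_eq hgp, ha, hz, hg, GenContFract.of_h_eq_floor]
      push_cast
      ring
    intro n
    induction n using Nat.strong_induction_on with
    | _ n ih =>
      match n with
      | 0 => exact h0
      | 1 => exact h1
      | (k+2) =>
        obtain ⟨gp, hgp⟩ := hs (k+1)
        obtain ⟨z, hz⟩ := GenContFract.exists_int_eq_of_partDen (GenContFract.partDen_eq_s_b hgp)
        have ha : gp.a = 1 :=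
          GenContFract.of_partNum_eq_one (GenContFract.partNum_eq_s_a hgp)
        obtain ⟨z1, hz1⟩ := ih k (by omega)
        obtain ⟨z2, hz2⟩ := ih (k+1) (by omega)
        refine ⟨z * z2 + z1, ?_⟩
        rw [GenContFract.nums_recurrence hgp hz1 hz2, ha, hz]
        push_cast
        ring
  -- approximation: |θ * q k - p k| ≤ 1 / q (k+1)
  have happrox : ∀ k, |θ * q k - g.nums k| ≤ 1 / q (k+1) := by
    intro k
    have h : |θ - g.convs k| ≤ 1 / (g.dens k * g.dens (k+1)) :=
      GenContFract.abs_sub_convs_le (hnt k)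
    rw [GenContFract.conv_eq_num_div_den, ← hq, ← hq] at h
    have hk := hqpos k
    have hk1 := hqpos (k+1)
    have e : θ * q k - g.nums k = (θ - g.nums k / q k) * q k := by
      field_simp
    rw [e, abs_mul, abs_of_pos hk]
    calc |θ - g.nums k / q k| * q k ≤ (1 / ((q k : ℝ) * q (k+1))) * q k :=
          mul_le_mul_of_nonneg_right h hk.le
      _ = 1 / q (k+1) := by field_simp
  -- determinant
  have hdet : ∀ k, |g.nums k * q (k+1) - q k * g.nums (k+1)| = 1 := by
    intro k
    have h : g.nums k * g.dens (k+1) - g.dens k * g.nums (k+1) = (-1)^(k+1) :=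
      SimpContFract.determinant (s := SimpContFract.of θ) (n := k) (hnt k)
    rw [← hq, ← hq] at h
    rw [h, abs_pow, abs_neg, abs_one, one_pow]
  -- lower bound on the distance to the nearest integer
  have hlow : ∀ k, 1 ≤ k → 1 / (2 * q (k+1)) ≤ distNearestInt ((q k : ℝ) * θ) := by
    intro k hk
    obtain ⟨z, hz⟩ := hint k
    set m : ℤ := round ((q k : ℝ) * θ) with hm
    have hB := hqpos k
    have hB' := hqpos (k+1)
    have hB'' := hqpos (k+2)
    have hq2' : (2:ℝ) ≤ q (k+1) := by exact_mod_cast hq2 k hk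
    have hrle : (q (k+1) : ℝ) + q k ≤ q (k+2) := by exact_mod_cast hrec k
    have hmle : (q k : ℝ) ≤ q (k+1) := by exact_mod_cast hmono k
    have hzle : |(q k : ℝ) * θ - z| ≤ 1 / q (k+1) := by
      have := happrox k
      rw [hz] at this
      rwa [mul_comm] at this
    have hdNI : distNearestInt ((q k : ℝ) * θ) = |(q k : ℝ) * θ - (m:ℝ)| := rfl
    rcases eq_or_ne m z with hcase | hcase
    · -- nearest integer is the numerator
      have h1 := happrox (k+1)
      have h2 := hdet k
      rw [hz] at h2
      -- key inequality
      have habs : |(z:ℝ) * q (k+1) - q k * g.nums (k+1)|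
          - |(q k : ℝ) * (θ * q (k+1) - g.nums (k+1))|
          ≤ |((q k : ℝ) * θ - z) * q (k+1)| := by
        have e : ((q k : ℝ) * θ - z) * q (k+1)
            = (q k : ℝ) * (θ * q (k+1) - g.nums (k+1))
              - ((z:ℝ) * q (k+1) - q k * g.nums (k+1)) := by ring
        rw [e]
        have h3 := abs_sub_abs_le_abs_sub ((z:ℝ) * q (k+1) - q k * g.nums (k+1))
          ((q k : ℝ) * (θ * q (k+1) - g.nums (k+1)))
        rw [abs_sub_comm ((z:ℝ) * q (k+1) - q k * g.nums (k+1))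
          ((q k : ℝ) * (θ * q (k+1) - g.nums (k+1)))] at h3
        linarith
      have hsmall : |(q k : ℝ) * (θ * q (k+1) - g.nums (k+1))| ≤ (q k : ℝ) / q (k+2) := by
        rw [abs_mul, abs_of_pos hB]
        calc (q k : ℝ) * |θ * q (k+1) - g.nums (k+1)| ≤ (q k : ℝ) * (1 / q (k+2)) :=
              mul_le_mul_of_nonneg_left h1 hB.le
          _ = (q k : ℝ) / q (k+2) := by ring
      have hhalf : (q k : ℝ) / q (k+2) ≤ 1/2 := by
        rw [div_le_iff₀ hB'']
        linarith
      have key : (1:ℝ)/2 ≤ |(q k : ℝ) * θ - z| * q (k+1) := by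
        have e2 : |((q k : ℝ) * θ - z) * q (k+1)| = |(q k : ℝ) * θ - z| * q (k+1) := by
          rw [abs_mul, abs_of_pos hB']
        rw [e2] at habs
        linarith [h2]
      rw [hdNI, hcase]
      rw [div_le_iff₀ (by positivity)]
      nlinarith
    · -- nearest integer differs from the numerator
      have hone : (1:ℝ) ≤ |(m:ℝ) - (z:ℝ)| := by
        have : (1:ℤ) ≤ |m - z| := Int.one_le_abs (sub_ne_zero.mpr hcase)
        calc (1:ℝ) = ((1:ℤ):ℝ) := by norm_num
          _ ≤ ((|m - z| : ℤ) : ℝ) := by exact_mod_cast this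
          _ = |(m:ℝ) - (z:ℝ)| := by push_cast [Int.cast_abs]; ring_nf
      have htri : |(m:ℝ) - (z:ℝ)| - |(q k : ℝ) * θ - z| ≤ |(q k : ℝ) * θ - m| := by
        have := abs_sub_abs_le_abs_sub ((m:ℝ) - (z:ℝ)) ((q k : ℝ) * θ - (z:ℝ))
        have e : (m:ℝ) - (z:ℝ) - ((q k : ℝ) * θ - (z:ℝ)) = -((q k : ℝ) * θ - m) := by ring
        rw [e, abs_neg] at this
        linarith
      have hinv : (1:ℝ) / q (k+1) ≤ 1/2 := by
        rw [div_le_iff₀ hB']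
        linarith
      have hinv2 : (1:ℝ) / (2 * q (k+1)) ≤ 1/4 := by
        rw [div_le_iff₀ (by positivity)]
        linarith
      rw [hdNI]
      linarith
  -- lower bound on each block sum
  have hbound : ∀ k, 1 ≤ k → ((q (k+1) : ℝ) - q k) / (c * q (k+1)) ≤ f k := by
    intro k hk
    have hB' := hqpos (k+1)
    have hterm : ∀ n ∈ Finset.Ico (q k) (q (k+1)),
        1 / (c * q (k+1)) ≤ min (1 / ((n : ℝ) * φ n)) (distNearestInt ((q k : ℝ) * θ)) := by
      intro n hn
      rw [Finset.mem_Ico] at hn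
      have hn1 : 1 ≤ n := le_trans (hq1 k) hn.1
      have hnpos : (0:ℝ) < n := by exact_mod_cast hn1
      have hnle : (n:ℝ) ≤ q (k+1) := by exact_mod_cast hn.2.le
      refine le_min ?_ ?_
      · apply one_div_le_one_div_of_le (mul_pos hnpos (hφpos n))
        calc (n:ℝ) * φ n ≤ (q (k+1) : ℝ) * c :=
              mul_le_mul hnle (hφbdd n) (hφpos n).le (by positivity)
          _ = c * q (k+1) := by ring
      · have h2q : (2:ℝ) * q (k+1) ≤ c * q (k+1) := by nlinarith
        exact le_trans (one_div_le_one_div_of_le (by positivity) h2q) (hlow k hk)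
    calc ((q (k+1) : ℝ) - q k) / (c * q (k+1))
        = ((q (k+1) - q k : ℕ) : ℝ) * (1 / (c * q (k+1))) := by
          rw [Nat.cast_sub (hmono k)]
          field_simp
      _ = (Finset.Ico (q k) (q (k+1))).card • (1 / (c * q (k+1))) := by
          rw [Nat.card_Ico, nsmul_eq_mul]
      _ = ∑ _n ∈ Finset.Ico (q k) (q (k+1)), 1 / (c * q (k+1)) := by
          rw [Finset.sum_const]
      _ ≤ f k := Finset.sum_le_sum hterm
  -- pair bound
  have hpair : ∀ k, 1 ≤ k → 1 / (2 * c) ≤ f k + f (k+1) := by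
    intro k hk
    have h1 := hbound k hk
    have h2 := hbound (k+1) (by omega)
    have hB := hqpos k
    have hB' := hqpos (k+1)
    have hB'' := hqpos (k+2)
    have hmle : (q k : ℝ) ≤ q (k+1) := by exact_mod_cast hmono k
    have hrle : (q (k+1) : ℝ) + q k ≤ q (k+2) := by exact_mod_cast hrec k
    have key : (1:ℝ)/2 ≤ ((q (k+1) : ℝ) - q k) / q (k+1)
        + ((q (k+2) : ℝ) - q (k+1)) / q (k+2) := by
      rw [div_add_div _ _ hB'.ne' hB''.ne', le_div_iff₀ (by positivity)]
      nlinarith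
    have hmul := mul_le_mul_of_nonneg_left key (by positivity : (0:ℝ) ≤ 1/c)
    have e0 : (1/c) * ((1:ℝ)/2) = 1 / (2*c) := by
      rw [div_mul_div_comm, one_mul, mul_comm]
    have e1 : (1/c) * (((q (k+1) : ℝ) - q k) / q (k+1))
        = ((q (k+1) : ℝ) - q k) / (c * q (k+1)) := by
      rw [div_mul_div_comm, one_mul]
    have e2 : (1/c) * (((q (k+2) : ℝ) - q (k+1)) / q (k+2))
        = ((q (k+2) : ℝ) - q (k+1)) / (c * q (k+2)) := by
      rw [div_mul_div_comm, one_mul]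
    rw [mul_add, e0, e1, e2] at hmul
    linarith
  -- conclude
  have hlim := hsum.tendsto_atTop_zero
  have hlim' : Tendsto (fun k => f (k+1)) atTop (nhds 0) :=
    hlim.comp (tendsto_add_atTop_nat 1)
  have hlim2 : Tendsto (fun k => f k + f (k+1)) atTop (nhds (0 + 0)) := hlim.add hlim'
  rw [add_zero] at hlim2
  have hfin : 1 / (2 * c) ≤ 0 :=
    ge_of_tendsto hlim2 (eventually_atTop.mpr ⟨1, fun k hk => hpair k hk⟩)
  have : (0:ℝ) < 1 / (2 * c) := by positivity
  linarith
end

section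
/- Let φ : ℕ → ℝ be positive, non-decreasing, tending to infinity, θ irrational with convergent denominators q_k, and set ψ(n) = 1/(n·φ(n)). Then ∑_{k≥0} ∑_{n=q_k}^{q_{k+1}-1} min(ψ(n), ‖q_k θ‖) = ∞ if and only if ∑_{k≥0} log(min(φ(q_k), q_{k+1}/q_k))/φ(q_k) = ∞. -/
open MeasureTheory Filter Real
open scoped ENNReal Classical

lemma harmonic_lower (a b : ℕ) (ha : 1 ≤ a) (hab : a ≤ b) :
    Real.log b - Real.log a ≤ ∑ n ∈ Finset.Ico a b, (1:ℝ)/n := by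
  induction b, hab using Nat.le_induction with
  | base => simp
  | succ b hab ih =>
    rw [Finset.sum_Ico_succ_top hab]
    have hb : (1:ℝ) ≤ b := by exact_mod_cast ha.trans hab
    have h0 : (0:ℝ) < b := by linarith
    have key : Real.log (b+1) - Real.log b ≤ 1/b := by
      have h1 : Real.log ((b+1)/b) ≤ (b+1)/b - 1 :=
        Real.log_le_sub_one_of_pos (by positivity)
      rw [Real.log_div (by positivity) (by positivity)] at h1
      have h2 : ((b:ℝ)+1)/b - 1 = 1/b := by field_simp; ring
      rw [h2] at h1
      linarith
    push_cast
    linarith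

lemma round_min (x : ℝ) (m : ℤ) : |x - round x| ≤ |x - m| := by
  rcases eq_or_ne m (round x) with rfl | hne
  · exact le_refl _
  · have h1 : (1:ℝ) ≤ |(m:ℝ) - round x| := by
      have := Int.one_le_abs (sub_ne_zero.mpr hne)
      calc (1:ℝ) ≤ |(m - round x : ℤ)| := by exact_mod_cast this
        _ = |(m:ℝ) - round x| := by push_cast; ring_nf
    have h2 : |x - round x| ≤ 1/2 := abs_sub_round x
    have h3 : |(m:ℝ) - round x| ≤ |x - m| + |x - round x| := by
      calc |(m:ℝ) - round x| = |(x - round x) - (x - m)| := by ring_nf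
        _ ≤ |x - round x| + |x - m| := abs_sub _ _
        _ = |x - m| + |x - round x| := by ring
    linarith

lemma harmonic_upper (a b : ℕ) (ha : 1 ≤ a) (hab : a ≤ b) :
    ∑ n ∈ Finset.Ico a b, (1:ℝ)/n ≤ 1/a + (Real.log b - Real.log a) := by
  have key : ∀ c : ℕ, a ≤ c → ∑ n ∈ Finset.Ico a (c+1), (1:ℝ)/n ≤ 1/a + (Real.log c - Real.log a) := by
    intro c hc
    induction c, hc using Nat.le_induction with
    | base => simp
    | succ c hc ih =>
      rw [Finset.sum_Ico_succ_top (by omega)]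
      have hc1 : (1:ℝ) ≤ c := by exact_mod_cast ha.trans hc
      have key2 : (1:ℝ)/(c+1) ≤ Real.log (c+1) - Real.log c := by
        have h1 : Real.log ((c:ℝ)/(c+1)) ≤ (c:ℝ)/(c+1) - 1 :=
          Real.log_le_sub_one_of_pos (by positivity)
        rw [Real.log_div (by positivity) (by positivity)] at h1
        have : (c:ℝ)/(c+1) - 1 = -(1/(c+1)) := by field_simp; ring
        rw [this] at h1
        linarith
      push_cast
      push_cast at ih
      linarith
  rcases Nat.eq_or_lt_of_le hab with rfl | hlt
  · simp
  · obtain ⟨c, rfl⟩ : ∃ c, b = c + 1 := ⟨b - 1, by omega⟩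
    have := key c (by omega)
    have hc0 : (0:ℝ) < c := by
      have : 1 ≤ c := by omega
      exact_mod_cast this
    have hmono : Real.log c ≤ Real.log (c+1) := by
      apply Real.log_le_log hc0
      push_cast; linarith
    push_cast at this ⊢
    linarith



lemma one_le_log_of_four_le {F : ℝ} (hF : 4 ≤ F) : 1 ≤ Real.log F := by
  rw [Real.le_log_iff_exp_le (by linarith)]
  have := Real.exp_one_lt_d9
  linarith

lemma block_upper (φ : ℕ → ℝ) (hφ : ∀ n, 0 < φ n) (Q Q' : ℕ) (F r : ℝ)
    (hQ : 1 ≤ Q) (hQQ : Q ≤ Q') (hF : 4 ≤ F)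
    (hFφ : ∀ n, Q ≤ n → F ≤ φ n) (hr0 : 0 ≤ r) (hr : r ≤ 1/(Q':ℝ)) :
    ∑ n ∈ Finset.Ico Q Q', min (1/((n:ℝ) * φ n)) r
      ≤ 2 * (Real.log (min F ((Q':ℝ)/(Q:ℝ))) / F) + 2/(Q:ℝ) := by
  have hQ0 : (0:ℝ) < Q := by exact_mod_cast hQ
  have hQ'0 : (0:ℝ) < Q' := by
    have : 1 ≤ Q' := hQ.trans hQQ
    exact_mod_cast this
  have hQQ' : (Q:ℝ) ≤ Q' := by exact_mod_cast hQQ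
  have hF0 : (0:ℝ) < F := by linarith
  have hterm : ∀ n, Q ≤ n → min (1/((n:ℝ) * φ n)) r ≤ (1/(n:ℝ))/F := by
    intro n hn
    have hn0 : (0:ℝ) < n := by
      have : 1 ≤ n := hQ.trans hn
      exact_mod_cast this
    refine (min_le_left _ _).trans ?_
    rw [div_div]
    apply one_div_le_one_div_of_le (by positivity)
    exact mul_le_mul_of_nonneg_left (hFφ n hn) hn0.le
  have hQinv : (0:ℝ) ≤ 1/(Q:ℝ) := by positivity
  by_cases hcase : (Q':ℝ) ≤ Q * F
  · -- min = Q'/Q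
    have hdivle : (Q':ℝ)/Q ≤ F := by rw [div_le_iff₀ hQ0]; linarith
    have hmin : min F ((Q':ℝ)/(Q:ℝ)) = (Q':ℝ)/Q := min_eq_right hdivle
    have hLg : Real.log ((Q':ℝ)/Q) = Real.log Q' - Real.log Q :=
      Real.log_div (ne_of_gt hQ'0) (ne_of_gt hQ0)
    have hLg0 : (0:ℝ) ≤ Real.log Q' - Real.log Q := by
      rw [← hLg]
      exact Real.log_nonneg ((one_le_div hQ0).mpr hQQ')
    have h1 : ∑ n ∈ Finset.Ico Q Q', min (1/((n:ℝ) * φ n)) r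
        ≤ (∑ n ∈ Finset.Ico Q Q', (1/(n:ℝ)))/F := by
      rw [Finset.sum_div]
      exact Finset.sum_le_sum (fun n hn => hterm n (Finset.mem_Ico.mp hn).1)
    have h2 : (∑ n ∈ Finset.Ico Q Q', (1/(n:ℝ)))/F
        ≤ (1/(Q:ℝ) + (Real.log Q' - Real.log Q))/F := by
      gcongr
      exact harmonic_upper Q Q' hQ hQQ
    have h3 : (1/(Q:ℝ) + (Real.log Q' - Real.log Q))/F
        = (1/(Q:ℝ))/F + (Real.log Q' - Real.log Q)/F := add_div _ _ _
    have h4 : (1/(Q:ℝ))/F ≤ 1/(Q:ℝ) := div_le_self hQinv (by linarith)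
    have h5 : (0:ℝ) ≤ (Real.log Q' - Real.log Q)/F := by positivity
    have h2Q : 2/(Q:ℝ) = 2*(1/(Q:ℝ)) := by ring
    rw [hmin, hLg]
    linarith
  · -- min = F
    push_neg at hcase
    have hdivle : F ≤ (Q':ℝ)/Q := by rw [le_div_iff₀ hQ0]; linarith
    have hmin : min F ((Q':ℝ)/(Q:ℝ)) = F := min_eq_left hdivle
    have hL1 : 1 ≤ Real.log F := one_le_log_of_four_le hF
    set M := ⌈(Q':ℝ)/F⌉₊ with hM
    have hMlow : (Q':ℝ)/F ≤ M := Nat.le_ceil _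
    have hM0 : (0:ℝ) < (Q':ℝ)/F := by positivity
    have hQM : Q ≤ M := by
      have h : (Q:ℝ) ≤ (M:ℝ) := by
        refine le_trans ?_ hMlow
        rw [le_div_iff₀ hF0]; linarith
      exact_mod_cast h
    have hMQ' : M ≤ Q' := by
      rw [hM, Nat.ceil_le]
      push_cast
      exact div_le_self hQ'0.le (by linarith)
    have hM0' : (0:ℝ) < M := lt_of_lt_of_le hM0 hMlow
    have hMup : (M:ℝ) ≤ (Q':ℝ)/F + 1 := (Nat.ceil_lt_add_one hM0.le).le
    rw [← Finset.sum_Ico_consecutive _ hQM hMQ']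
    -- part 1
    have hpart1 : ∑ n ∈ Finset.Ico Q M, min (1/((n:ℝ) * φ n)) r ≤ 1/F + 1/(Q':ℝ) := by
      have hb : ∑ n ∈ Finset.Ico Q M, min (1/((n:ℝ) * φ n)) r
          ≤ (Finset.Ico Q M).card • r :=
        Finset.sum_le_card_nsmul _ _ r (fun n _ => min_le_right _ _)
      rw [Nat.card_Ico, nsmul_eq_mul] at hb
      have hcast : ((M - Q : ℕ):ℝ) ≤ (M:ℝ) := by
        have : (M - Q : ℕ) ≤ M := Nat.sub_le _ _
        exact_mod_cast this
      have hb2 : ((M - Q:ℕ):ℝ) * r ≤ (M:ℝ) * (1/(Q':ℝ)) := by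
        apply mul_le_mul hcast hr hr0 hM0'.le
      have hb3 : (M:ℝ) * (1/(Q':ℝ)) ≤ ((Q':ℝ)/F + 1) * (1/(Q':ℝ)) := by
        apply mul_le_mul_of_nonneg_right hMup (by positivity)
      have hb4 : ((Q':ℝ)/F + 1) * (1/(Q':ℝ)) = 1/F + 1/(Q':ℝ) := by
        field_simp
      linarith
    -- part 2
    have hpart2 : ∑ n ∈ Finset.Ico M Q', min (1/((n:ℝ) * φ n)) r
        ≤ 1/(Q':ℝ) + Real.log F / F := by
      have h1 : ∑ n ∈ Finset.Ico M Q', min (1/((n:ℝ) * φ n)) r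
          ≤ (∑ n ∈ Finset.Ico M Q', (1/(n:ℝ)))/F := by
        rw [Finset.sum_div]
        exact Finset.sum_le_sum (fun n hn => hterm n (hQM.trans (Finset.mem_Ico.mp hn).1))
      have h2 : (∑ n ∈ Finset.Ico M Q', (1/(n:ℝ)))/F
          ≤ (1/(M:ℝ) + (Real.log Q' - Real.log M))/F := by
        gcongr
        exact harmonic_upper M Q' (hQ.trans hQM) hMQ'
      have h3 : 1/(M:ℝ) ≤ F/(Q':ℝ) := by
        rw [div_le_div_iff₀ hM0' hQ'0]
        rw [div_le_iff₀ hF0] at hMlow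
        linarith
      have h4 : Real.log Q' - Real.log M ≤ Real.log F := by
        have : Real.log ((Q':ℝ)/F) ≤ Real.log M := Real.log_le_log hM0 hMlow
        rw [Real.log_div (ne_of_gt hQ'0) (ne_of_gt hF0)] at this
        linarith
      have h5 : (1/(M:ℝ) + (Real.log Q' - Real.log M))/F
          ≤ (F/(Q':ℝ) + Real.log F)/F := by
        gcongr
      have h6 : (F/(Q':ℝ) + Real.log F)/F = 1/(Q':ℝ) + Real.log F / F := by
        field_simp
      linarith
    have hQ'Q : 1/(Q':ℝ) ≤ 1/(Q:ℝ) := by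
      apply one_div_le_one_div_of_le hQ0 hQQ'
    have hFlog : 1/F ≤ Real.log F / F := by
      gcongr
    have h2Q : 2/(Q:ℝ) = 2*(1/(Q:ℝ)) := by ring
    rw [hmin]
    linarith


lemma block_lower (φ : ℕ → ℝ) (hφ : ∀ n, 0 < φ n) (Q Q' : ℕ) (G r : ℝ)
    (hQ : 1 ≤ Q) (hQQ : Q < Q') (hG : 4 ≤ G) (hφG : ∀ n, n < Q' → φ n ≤ G)
    (hr : 1/(2*(Q':ℝ)) ≤ r) :
    Real.log (min G ((Q':ℝ)/(Q:ℝ))) / (4*G)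
      ≤ ∑ n ∈ Finset.Ico Q Q', min (1/((n:ℝ) * φ n)) r := by
  have hQ0 : (0:ℝ) < Q := by exact_mod_cast hQ
  have hQ'0 : (0:ℝ) < Q' := by
    have : 1 ≤ Q' := hQ.trans hQQ.le
    exact_mod_cast this
  have hQQ' : (Q:ℝ) < Q' := by exact_mod_cast hQQ
  have hG0 : (0:ℝ) < G := by linarith
  have hQ1 : (1:ℝ) ≤ Q := by exact_mod_cast hQ
  have hr0 : (0:ℝ) < r := lt_of_lt_of_le (by positivity) hr
  have hterm : ∀ n, n < Q' → (Q':ℝ) ≤ (n:ℝ)*G → 0 < (n:ℝ) →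
      (1/(n:ℝ))/(2*G) ≤ min (1/((n:ℝ) * φ n)) r := by
    intro n hn hnG hn0
    have hφn := hφ n
    rw [div_div]
    apply le_min
    · apply one_div_le_one_div_of_le (by positivity)
      calc (n:ℝ) * φ n ≤ (n:ℝ) * G := by
            exact mul_le_mul_of_nonneg_left (hφG n hn) hn0.le
        _ ≤ (n:ℝ) * (2*G) := by nlinarith
    · refine le_trans ?_ hr
      apply one_div_le_one_div_of_le (by positivity)
      nlinarith
  have htermpos : ∀ n ∈ Finset.Ico Q Q', (0:ℝ) ≤ min (1/((n:ℝ) * φ n)) r := by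
    intro n hn
    rw [Finset.mem_Ico] at hn
    have hn0 : (0:ℝ) < n := by
      have : 1 ≤ n := hQ.trans hn.1
      exact_mod_cast this
    have := hφ n
    positivity
  by_cases hcase : (Q':ℝ) ≤ Q * G
  · -- min = Q'/Q
    have hdivle : (Q':ℝ)/Q ≤ G := by rw [div_le_iff₀ hQ0]; linarith
    have hmin : min G ((Q':ℝ)/(Q:ℝ)) = (Q':ℝ)/Q := min_eq_right hdivle
    have hLg : Real.log ((Q':ℝ)/Q) = Real.log Q' - Real.log Q :=
      Real.log_div (ne_of_gt hQ'0) (ne_of_gt hQ0)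
    have hLg0 : (0:ℝ) ≤ Real.log Q' - Real.log Q := by
      rw [← hLg]
      exact Real.log_nonneg ((one_le_div hQ0).mpr hQQ'.le)
    have h1 : (∑ n ∈ Finset.Ico Q Q', (1/(n:ℝ)))/(2*G)
        ≤ ∑ n ∈ Finset.Ico Q Q', min (1/((n:ℝ) * φ n)) r := by
      rw [Finset.sum_div]
      apply Finset.sum_le_sum
      intro n hn
      rw [Finset.mem_Ico] at hn
      have hn0 : (0:ℝ) < n := by
        have : 1 ≤ n := hQ.trans hn.1
        exact_mod_cast this
      apply hterm n hn.2 _ hn0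
      calc (Q':ℝ) ≤ Q * G := hcase
        _ ≤ (n:ℝ) * G := by
          have : (Q:ℝ) ≤ n := by exact_mod_cast hn.1
          nlinarith
    have h2 : (Real.log Q' - Real.log Q)/(2*G)
        ≤ (∑ n ∈ Finset.Ico Q Q', (1/(n:ℝ)))/(2*G) := by
      gcongr
      exact harmonic_lower Q Q' hQ hQQ.le
    rw [hmin, hLg]
    have h3 : (Real.log Q' - Real.log Q)/(4*G) ≤ (Real.log Q' - Real.log Q)/(2*G) := by
      gcongr <;> linarith
    linarith
  · -- min = G
    push_neg at hcase
    have hdivle : G ≤ (Q':ℝ)/Q := by rw [le_div_iff₀ hQ0]; linarith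
    have hmin : min G ((Q':ℝ)/(Q:ℝ)) = G := min_eq_left hdivle
    set M := ⌈(Q':ℝ)/G⌉₊ with hM
    have hMlow : (Q':ℝ)/G ≤ M := Nat.le_ceil _
    have hM0 : (0:ℝ) < (Q':ℝ)/G := by positivity
    have hQM : Q ≤ M := by
      have h : (Q:ℝ) ≤ (M:ℝ) := by
        refine le_trans ?_ hMlow
        rw [le_div_iff₀ hG0]; linarith
      exact_mod_cast h
    have hMQ' : M ≤ Q' := by
      rw [hM, Nat.ceil_le]
      exact div_le_self hQ'0.le (by linarith)
    have hM0' : (0:ℝ) < M := lt_of_lt_of_le hM0 hMlow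
    have hone : (1:ℝ) ≤ (Q':ℝ)/G := by
      rw [le_div_iff₀ hG0]; nlinarith [hQ1]
    have hMup : (M:ℝ) ≤ 2*(Q':ℝ)/G := by
      have := (Nat.ceil_lt_add_one hM0.le).le
      have h2 : (Q':ℝ)/G + 1 ≤ 2*(Q':ℝ)/G := by
        have : 2*(Q':ℝ)/G = (Q':ℝ)/G + (Q':ℝ)/G := by ring
        linarith
      linarith
    have h1 : (∑ n ∈ Finset.Ico M Q', (1/(n:ℝ)))/(2*G)
        ≤ ∑ n ∈ Finset.Ico M Q', min (1/((n:ℝ) * φ n)) r := by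
      rw [Finset.sum_div]
      apply Finset.sum_le_sum
      intro n hn
      rw [Finset.mem_Ico] at hn
      have hn0 : (0:ℝ) < n := lt_of_lt_of_le hM0' (by exact_mod_cast hn.1)
      apply hterm n hn.2 _ hn0
      have hMn : (M:ℝ) ≤ n := by exact_mod_cast hn.1
      calc (Q':ℝ) = ((Q':ℝ)/G) * G := by field_simp
        _ ≤ (M:ℝ) * G := by exact mul_le_mul_of_nonneg_right hMlow hG0.le
        _ ≤ (n:ℝ) * G := by exact mul_le_mul_of_nonneg_right hMn hG0.le
    have h2 : (Real.log Q' - Real.log M)/(2*G)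
        ≤ (∑ n ∈ Finset.Ico M Q', (1/(n:ℝ)))/(2*G) := by
      gcongr
      exact harmonic_lower M Q' (hQ.trans hQM) hMQ'
    have hlogM : Real.log M ≤ Real.log 2 + Real.log Q' - Real.log G := by
      have h := Real.log_le_log hM0' hMup
      rw [mul_div_assoc, Real.log_mul (by norm_num) (ne_of_gt hM0),
        Real.log_div (ne_of_gt hQ'0) (ne_of_gt hG0)] at h
      linarith
    have hlog4 : Real.log 4 ≤ Real.log G := Real.log_le_log (by norm_num) hG
    have hlog42 : Real.log 4 = 2 * Real.log 2 := by
      have : (4:ℝ) = 2^2 := by norm_num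
      rw [this, Real.log_pow]
      push_cast; ring
    have hsub : ∑ n ∈ Finset.Ico M Q', min (1/((n:ℝ) * φ n)) r
        ≤ ∑ n ∈ Finset.Ico Q Q', min (1/((n:ℝ) * φ n)) r := by
      apply Finset.sum_le_sum_of_subset_of_nonneg
      · exact Finset.Ico_subset_Ico hQM le_rfl
      · intro n hn _
        exact htermpos n hn
    rw [hmin]
    have hfinal : Real.log G / (4*G) ≤ (Real.log Q' - Real.log M)/(2*G) := by
      rw [div_le_div_iff₀ (by linarith) (by linarith)]
      have hlogG2 : 2 * Real.log 2 ≤ Real.log G := by linarith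
      nlinarith [hG0, hlogM, hlogG2, Real.log_pos (by norm_num : (1:ℝ) < 2)]
    linarith

lemma jump_summable (F : ℕ → ℝ) (hm : Monotone F) (h4 : ∀ k, 4 ≤ F k) :
    Summable (fun k => if 2 * F k ≤ F (k+1) then Real.log (F k) / F k else 0) := by
  have hFpos : ∀ k, (0:ℝ) < F k := fun k => by linarith [h4 k]
  have hF1 : ∀ k, (1:ℝ) ≤ F k := fun k => by linarith [h4 k]
  set i : ℕ → ℕ := fun k => ⌊Real.logb 2 (F k)⌋₊ with hi
  have key1 : ∀ k, (2:ℝ)^(i k) ≤ F k := by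
    intro k
    have hlb : (0:ℝ) ≤ Real.logb 2 (F k) := Real.logb_nonneg (by norm_num) (hF1 k)
    have h1 : ((i k : ℕ):ℝ) ≤ Real.logb 2 (F k) := Nat.floor_le hlb
    calc (2:ℝ)^(i k) = (2:ℝ)^((i k : ℕ):ℝ) := by rw [Real.rpow_natCast]
      _ ≤ (2:ℝ)^(Real.logb 2 (F k)) := Real.rpow_le_rpow_of_exponent_le (by norm_num) h1
      _ = F k := Real.rpow_logb (by norm_num) (by norm_num) (hFpos k)
  have key2 : ∀ k, Real.log (F k) ≤ ((i k : ℕ) + 1) * Real.log 2 := by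
    intro k
    have h1 : Real.logb 2 (F k) < (i k : ℕ) + 1 := Nat.lt_floor_add_one _
    have h2 : Real.log (F k) = Real.logb 2 (F k) * Real.log 2 := by
      rw [Real.logb]
      field_simp
    rw [h2]
    have hl2 : (0:ℝ) < Real.log 2 := Real.log_pos (by norm_num)
    nlinarith
  set g : ℕ → ℝ := fun m => ((m:ℝ)+1) * Real.log 2 * (1/2)^m with hg
  have hgsum : Summable g := by
    have hs1 : Summable (fun m : ℕ => (m:ℝ)^1 * (1/2)^m) :=
      summable_pow_mul_geometric_of_norm_lt_one 1
        (by rw [Real.norm_eq_abs, abs_of_pos] <;> norm_num)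
    have hs2 : Summable (fun m : ℕ => ((1:ℝ)/2)^m) :=
      summable_geometric_of_lt_one (by norm_num) (by norm_num)
    have := (hs1.add hs2).mul_left (Real.log 2)
    apply this.congr
    intro m
    simp [hg]
    ring
  have hgnonneg : ∀ m, 0 ≤ g m := by
    intro m
    have := Real.log_pos (by norm_num : (1:ℝ) < 2)
    positivity
  set Sset : Set ℕ := {k | 2 * F k ≤ F (k+1)} with hS
  have heq : (fun k => if 2 * F k ≤ F (k+1) then Real.log (F k) / F k else 0)
      = Set.indicator Sset (fun k => Real.log (F k) / F k) := by
    funext k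
    rw [Set.indicator_apply]
    simp [hS, Set.mem_setOf_eq]
  rw [heq, ← summable_subtype_iff_indicator]
  have hj : Function.Injective (fun k : Sset => i (k:ℕ)) := by
    have hsm : StrictMono (fun k : Sset => i (k:ℕ)) := by
      intro a b hab
      have haS : 2 * F (a:ℕ) ≤ F ((a:ℕ)+1) := a.2
      have hab' : ((a:ℕ)+1) ≤ (b:ℕ) := hab
      have hchain : (2:ℝ)^(i (a:ℕ) + 1) ≤ F (b:ℕ) := by
        calc (2:ℝ)^(i (a:ℕ) + 1) = 2 * (2:ℝ)^(i (a:ℕ)) := by ring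
          _ ≤ 2 * F (a:ℕ) := by linarith [key1 (a:ℕ)]
          _ ≤ F ((a:ℕ)+1) := haS
          _ ≤ F (b:ℕ) := hm hab'
      have : ((i (a:ℕ) + 1 : ℕ):ℝ) ≤ Real.logb 2 (F (b:ℕ)) := by
        rw [Real.le_logb_iff_rpow_le (by norm_num) (hFpos _)]
        rw [Real.rpow_natCast]
        exact_mod_cast hchain
      have hfloor : i (a:ℕ) + 1 ≤ i (b:ℕ) := Nat.le_floor this
      show i (a:ℕ) < i (b:ℕ)
      omega
    exact hsm.injective
  apply Summable.of_nonneg_of_le ?hpos ?hle (hgsum.comp_injective hj)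
  case hpos =>
    intro k
    have h1 := Real.log_nonneg (hF1 (k:ℕ))
    have h2 := hFpos (k:ℕ)
    exact div_nonneg h1 h2.le
  case hle =>
    intro k
    show Real.log (F (k:ℕ)) / F (k:ℕ) ≤ g (i (k:ℕ))
    have h1 := key1 (k:ℕ)
    have h2 := key2 (k:ℕ)
    have hl2 : (0:ℝ) < Real.log 2 := Real.log_pos (by norm_num)
    have hpow : (0:ℝ) < (2:ℝ)^(i (k:ℕ)) := by positivity
    have hdd : Real.log (F (k:ℕ)) / F (k:ℕ)
        ≤ ((i (k:ℕ) : ℝ)+1) * Real.log 2 / (2:ℝ)^(i (k:ℕ)) :=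
      div_le_div₀ (by positivity) h2 hpow h1
    have hgm : g (i (k:ℕ)) = ((i (k:ℕ) : ℝ)+1) * Real.log 2 / (2:ℝ)^(i (k:ℕ)) := by
      rw [hg]
      simp only [one_div_pow, mul_one_div]
    rw [hgm]
    exact hdd



section CF
variable (θ : ℝ) (hθ : Irrational θ)

include hθ in
lemma cf_notTerm : ∀ n, ¬(GenContFract.of θ).TerminatedAt n := by
  intro n h
  have hterm : (GenContFract.of θ).Terminates := ⟨n, h⟩
  rw [GenContFract.terminates_iff_rat] at hterm
  obtain ⟨x, hx⟩ := hterm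
  exact hθ ⟨x, hx.symm⟩

variable (q : ℕ → ℕ) (hq : ∀ k, (q k : ℝ) = (GenContFract.of θ).dens k)

include hθ hq

lemma cf_one_le : ∀ k, 1 ≤ q k := by
  intro k
  have h1 : ((Nat.fib (k+1) : ℕ):ℝ) ≤ (GenContFract.of θ).dens k :=
    GenContFract.succ_nth_fib_le_of_nth_den (Or.inr (cf_notTerm θ hθ _))
  have h2 : 1 ≤ Nat.fib (k+1) := Nat.fib_pos.mpr (Nat.succ_pos k)
  have : ((1:ℕ):ℝ) ≤ (q k : ℝ) := by
    rw [hq k]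
    exact le_trans (by exact_mod_cast h2) h1
  exact_mod_cast this

lemma cf_mono : ∀ k, q k ≤ q (k+1) := by
  intro k
  have : (q k:ℝ) ≤ (q (k+1):ℝ) := by
    rw [hq k, hq (k+1)]
    exact GenContFract.of_den_mono
  exact_mod_cast this

lemma cf_rec : ∀ k, q k + q (k+1) ≤ q (k+2) := by
  intro k
  obtain ⟨gp, hgp⟩ : ∃ gp, (GenContFract.of θ).s.get? (k+1) = some gp :=
    Option.ne_none_iff_exists'.mp (cf_notTerm θ hθ (k+1))
  have hrec := GenContFract.dens_recurrence hgp rfl rfl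
  have ha : gp.a = 1 :=
    GenContFract.of_partNum_eq_one (GenContFract.partNum_eq_s_a hgp)
  have hb : 1 ≤ gp.b :=
    GenContFract.of_one_le_get?_partDen (GenContFract.partDen_eq_s_b hgp)
  have hd0 : (0:ℝ) ≤ (GenContFract.of θ).dens (k+1) := GenContFract.zero_le_of_den
  have : (q k:ℝ) + (q (k+1):ℝ) ≤ (q (k+2):ℝ) := by
    rw [hq k, hq (k+1), hq (k+2), hrec, ha]
    nlinarith
  exact_mod_cast this

lemma cf_num_int : ∀ k, ∃ z : ℤ, (GenContFract.of θ).nums k = (z:ℝ) := by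
  intro k
  induction k using Nat.strong_induction_on with
  | _ k ih =>
    match k with
    | 0 =>
      exact ⟨⌊θ⌋, by rw [GenContFract.zeroth_num_eq_h, GenContFract.of_h_eq_floor]⟩
    | 1 =>
      obtain ⟨gp, hgp⟩ : ∃ gp, (GenContFract.of θ).s.get? 0 = some gp :=
        Option.ne_none_iff_exists'.mp (cf_notTerm θ hθ 0)
      obtain ⟨z, hz⟩ :=
        GenContFract.exists_int_eq_of_partDen (GenContFract.partDen_eq_s_b hgp)
      have ha : gp.a = 1 :=
        GenContFract.of_partNum_eq_one (GenContFract.partNum_eq_s_a hgp)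
      refine ⟨z * ⌊θ⌋ + 1, ?_⟩
      rw [GenContFract.first_num_eq hgp, ha, GenContFract.of_h_eq_floor, hz]
      push_cast
      ring
    | (m+2) =>
      obtain ⟨gp, hgp⟩ : ∃ gp, (GenContFract.of θ).s.get? (m+1) = some gp :=
        Option.ne_none_iff_exists'.mp (cf_notTerm θ hθ (m+1))
      obtain ⟨z, hz⟩ :=
        GenContFract.exists_int_eq_of_partDen (GenContFract.partDen_eq_s_b hgp)
      have ha : gp.a = 1 :=
        GenContFract.of_partNum_eq_one (GenContFract.partNum_eq_s_a hgp)
      obtain ⟨z0, hz0⟩ := ih m (by omega)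
      obtain ⟨z1, hz1⟩ := ih (m+1) (by omega)
      refine ⟨z * z1 + z0, ?_⟩
      rw [GenContFract.nums_recurrence hgp hz0 hz1, ha, hz]
      push_cast
      ring

lemma cf_dist_ub : ∀ k, distNearestInt ((q k:ℝ) * θ) ≤ 1/(q (k+1):ℝ) := by
  intro k
  obtain ⟨z, hz⟩ := cf_num_int θ hθ q hq k
  have hq0 : (0:ℝ) < q k := by
    have := cf_one_le θ hθ q hq k
    exact_mod_cast this
  have hq1 : (0:ℝ) < q (k+1) := by
    have := cf_one_le θ hθ q hq (k+1)
    exact_mod_cast this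
  have hconv := GenContFract.abs_sub_convs_le (cf_notTerm θ hθ k)
  rw [GenContFract.conv_eq_num_div_den, hz, ← hq k, ← hq (k+1)] at hconv
  have hkey : |(q k:ℝ) * θ - z| ≤ 1/(q (k+1):ℝ) := by
    have h2 : |(q k:ℝ) * θ - z| = (q k:ℝ) * |θ - (z:ℝ)/(q k:ℝ)| := by
      have he : (q k:ℝ) * (θ - (z:ℝ)/(q k:ℝ)) = (q k:ℝ) * θ - z := by
        field_simp
      rw [← he, abs_mul, abs_of_pos hq0]
    rw [h2]
    calc (q k:ℝ) * |θ - (z:ℝ)/(q k:ℝ)| ≤ (q k:ℝ) * (1/((q k:ℝ) * (q (k+1):ℝ))) :=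
          mul_le_mul_of_nonneg_left hconv hq0.le
      _ = 1/(q (k+1):ℝ) := by field_simp
  exact le_trans (round_min _ z) hkey

end CF

section CF2
variable (θ : ℝ) (hθ : Irrational θ) (q : ℕ → ℕ)
    (hq : ∀ k, (q k : ℝ) = (GenContFract.of θ).dens k)
include hθ hq

lemma cf_dist_lb : ∀ k, 2 ≤ q (k+1) →
    1/(2*(q (k+1):ℝ)) ≤ distNearestInt ((q k:ℝ) * θ) := by
  intro k hk2
  obtain ⟨z, hz⟩ := cf_num_int θ hθ q hq k
  obtain ⟨z', hz'⟩ := cf_num_int θ hθ q hq (k+1)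
  have hq0 : (0:ℝ) < q k := by
    have := cf_one_le θ hθ q hq k; exact_mod_cast this
  have hq1 : (0:ℝ) < q (k+1) := by
    have := cf_one_le θ hθ q hq (k+1); exact_mod_cast this
  have hq2 : (0:ℝ) < q (k+2) := by
    have := cf_one_le θ hθ q hq (k+2); exact_mod_cast this
  have hk2' : (2:ℝ) ≤ q (k+1) := by exact_mod_cast hk2
  -- determinant
  have hdet : (GenContFract.of θ).nums k * (GenContFract.of θ).dens (k+1) -
      (GenContFract.of θ).dens k * (GenContFract.of θ).nums (k+1) = (-1)^(k+1) := by
    have hsimp := GenContFract.of_isSimpContFract θ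
    exact SimpContFract.determinant (s := ⟨GenContFract.of θ, hsimp⟩) (cf_notTerm θ hθ k)
  rw [hz, hz', ← hq k, ← hq (k+1)] at hdet
  -- convergent difference
  have hdiff : |(z':ℝ)/(q (k+1):ℝ) - (z:ℝ)/(q k:ℝ)| = 1/((q k:ℝ) * (q (k+1):ℝ)) := by
    rw [div_sub_div _ _ (ne_of_gt hq1) (ne_of_gt hq0), abs_div]
    have hnum : (z':ℝ) * (q k:ℝ) - (q (k+1):ℝ) * (z:ℝ) = -(-1:ℝ)^(k+1) := by
      linarith [hdet]
    rw [hnum, abs_neg, abs_pow, abs_neg, abs_one, one_pow]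
    rw [abs_of_pos (by positivity)]
    congr 1
    ring
  -- bounds on |θ - convergents|
  have hconv0 := GenContFract.abs_sub_convs_le (cf_notTerm θ hθ k)
  rw [GenContFract.conv_eq_num_div_den, hz, ← hq k, ← hq (k+1)] at hconv0
  have hconv1 := GenContFract.abs_sub_convs_le (cf_notTerm θ hθ (k+1))
  rw [GenContFract.conv_eq_num_div_den, hz', ← hq (k+1), ← hq (k+2)] at hconv1
  -- triangle: |θ - z/q k| ≥ 1/(q k q(k+1)) - 1/(q(k+1) q(k+2))
  have htri : 1/((q k:ℝ) * (q (k+1):ℝ)) - 1/((q (k+1):ℝ) * (q (k+2):ℝ))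
      ≤ |θ - (z:ℝ)/(q k:ℝ)| := by
    have h1 : |(z':ℝ)/(q (k+1):ℝ) - (z:ℝ)/(q k:ℝ)|
        ≤ |θ - (z:ℝ)/(q k:ℝ)| + |θ - (z':ℝ)/(q (k+1):ℝ)| := by
      calc |(z':ℝ)/(q (k+1):ℝ) - (z:ℝ)/(q k:ℝ)|
          = |(θ - (z:ℝ)/(q k:ℝ)) - (θ - (z':ℝ)/(q (k+1):ℝ))| := by ring_nf
        _ ≤ |θ - (z:ℝ)/(q k:ℝ)| + |θ - (z':ℝ)/(q (k+1):ℝ)| := abs_sub _ _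
    rw [hdiff] at h1
    linarith
  -- q(k+2) ≥ 2 q k
  have hq2k : 2*(q k:ℝ) ≤ (q (k+2):ℝ) := by
    have h1 := cf_rec θ hθ q hq k
    have h2 := cf_mono θ hθ q hq k
    have : (q k:ℝ) + (q (k+1):ℝ) ≤ (q (k+2):ℝ) := by exact_mod_cast h1
    have : (q k:ℝ) ≤ (q (k+1):ℝ) := by exact_mod_cast h2
    linarith [this]
  -- |q k θ - z| ≥ 1/(2 q(k+1))
  have hlow : 1/(2*(q (k+1):ℝ)) ≤ |(q k:ℝ) * θ - z| := by
    have h2 : |(q k:ℝ) * θ - z| = (q k:ℝ) * |θ - (z:ℝ)/(q k:ℝ)| := by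
      have he : (q k:ℝ) * (θ - (z:ℝ)/(q k:ℝ)) = (q k:ℝ) * θ - z := by
        field_simp
      rw [← he, abs_mul, abs_of_pos hq0]
    rw [h2]
    have h3 : (q k:ℝ) * (1/((q k:ℝ) * (q (k+1):ℝ)) - 1/((q (k+1):ℝ) * (q (k+2):ℝ)))
        ≤ (q k:ℝ) * |θ - (z:ℝ)/(q k:ℝ)| := mul_le_mul_of_nonneg_left htri hq0.le
    refine le_trans ?_ h3
    rw [mul_sub]
    have e1 : (q k:ℝ) * (1/((q k:ℝ) * (q (k+1):ℝ))) = 1/(q (k+1):ℝ) := by field_simp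
    have e2 : (q k:ℝ) * (1/((q (k+1):ℝ) * (q (k+2):ℝ)))
        = (q k:ℝ)/((q (k+1):ℝ) * (q (k+2):ℝ)) := by ring
    rw [e1, e2]
    have e3 : (q k:ℝ)/((q (k+1):ℝ) * (q (k+2):ℝ)) ≤ 1/(2*(q (k+1):ℝ)) := by
      rw [div_le_div_iff₀ (by positivity) (by positivity)]
      nlinarith
    have e4 : 1/(2*(q (k+1):ℝ)) + 1/(2*(q (k+1):ℝ)) = 1/(q (k+1):ℝ) := by
      rw [← add_div, show (1:ℝ)+1 = 2*1 by norm_num,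
        mul_div_mul_left (1:ℝ) _ (two_ne_zero (α := ℝ))]
    linarith
  -- upper bound |q k θ - z| ≤ 1/q(k+1) ≤ 1/2
  have hup : |(q k:ℝ) * θ - z| ≤ 1/(q (k+1):ℝ) := by
    have h2 : |(q k:ℝ) * θ - z| = (q k:ℝ) * |θ - (z:ℝ)/(q k:ℝ)| := by
      have he : (q k:ℝ) * (θ - (z:ℝ)/(q k:ℝ)) = (q k:ℝ) * θ - z := by
        field_simp
      rw [← he, abs_mul, abs_of_pos hq0]
    rw [h2]
    calc (q k:ℝ) * |θ - (z:ℝ)/(q k:ℝ)| ≤ (q k:ℝ) * (1/((q k:ℝ) * (q (k+1):ℝ))) :=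
          mul_le_mul_of_nonneg_left hconv0 hq0.le
      _ = 1/(q (k+1):ℝ) := by field_simp
  -- conclude
  set x := (q k:ℝ) * θ with hx
  rcases eq_or_ne (round x) z with hroundz | hroundz
  · unfold distNearestInt
    rw [hroundz]
    exact hlow
  · unfold distNearestInt
    have h1 : (1:ℝ) ≤ |(z:ℝ) - (round x:ℤ)| := by
      have hne : z - round x ≠ 0 := sub_ne_zero.mpr hroundz.symm
      have := Int.one_le_abs hne
      calc (1:ℝ) ≤ |((z - round x : ℤ):ℝ)| := by exact_mod_cast this
        _ = |(z:ℝ) - (round x:ℤ)| := by push_cast; ring_nf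
    have h2 : |(z:ℝ) - round x| ≤ |x - z| + |x - round x| := by
      calc |(z:ℝ) - round x| = |(x - round x) - (x - z)| := by ring_nf
        _ ≤ |x - round x| + |x - z| := abs_sub _ _
        _ = |x - z| + |x - round x| := by ring
    have h3 : 1/(q (k+1):ℝ) ≤ 1/2 := by
      rw [div_le_div_iff₀ hq1 (by norm_num)]
      linarith
    have h4 : 1/(2*(q (k+1):ℝ)) ≤ 1/4 := by
      rw [div_le_div_iff₀ (by positivity) (by norm_num)]
      linarith
    linarith
end CF2

section CF3
variable (θ : ℝ) (hθ : Irrational θ) (q : ℕ → ℕ)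
    (hq : ∀ k, (q k : ℝ) = (GenContFract.of θ).dens k)
include hθ hq

lemma cf_sqrt_growth : ∀ k, Real.sqrt 2 ^ k ≤ Real.sqrt 2 * q k := by
  have hs1 : (1:ℝ) < Real.sqrt 2 := by
    rw [show (1:ℝ) = Real.sqrt 1 by simp]
    exact Real.sqrt_lt_sqrt (by norm_num) (by norm_num)
  have hsq : Real.sqrt 2 ^ 2 = 2 := Real.sq_sqrt (by norm_num)
  intro k
  induction k using Nat.strong_induction_on with
  | _ k ih =>
    match k with
    | 0 =>
      have h1 : (1:ℝ) ≤ q 0 := by exact_mod_cast cf_one_le θ hθ q hq 0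
      nlinarith
    | 1 =>
      have h1 : (1:ℝ) ≤ q 1 := by exact_mod_cast cf_one_le θ hθ q hq 1
      nlinarith
    | (m+2) =>
      have ihm := ih m (by omega)
      have hrec : (q m:ℝ) + (q (m+1):ℝ) ≤ (q (m+2):ℝ) := by
        exact_mod_cast cf_rec θ hθ q hq m
      have hmono : (q m:ℝ) ≤ (q (m+1):ℝ) := by exact_mod_cast cf_mono θ hθ q hq m
      have hpow : Real.sqrt 2 ^ (m+2) = 2 * Real.sqrt 2 ^ m := by
        rw [pow_add, hsq]
        ring
      rw [hpow]
      nlinarith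
end CF3

section CF4
variable (θ : ℝ) (hθ : Irrational θ) (q : ℕ → ℕ)
    (hq : ∀ k, (q k : ℝ) = (GenContFract.of θ).dens k)
include hθ hq

lemma cf_summable_inv : Summable (fun k => 1/(q k:ℝ)) := by
  have hs1 : (1:ℝ) < Real.sqrt 2 := by
    rw [show (1:ℝ) = Real.sqrt 1 by simp]
    exact Real.sqrt_lt_sqrt (by norm_num) (by norm_num)
  have hs0 : (0:ℝ) < Real.sqrt 2 := by linarith
  have hgeo : Summable (fun k : ℕ => Real.sqrt 2 * ((Real.sqrt 2)⁻¹)^k) := by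
    apply Summable.mul_left
    apply summable_geometric_of_lt_one (by positivity)
    rw [inv_lt_one_iff₀]
    right; exact hs1
  apply Summable.of_nonneg_of_le (fun k => by positivity) (fun k => ?_) hgeo
  have hg := cf_sqrt_growth θ hθ q hq k
  have hq0 : (0:ℝ) < q k := by
    have := cf_one_le θ hθ q hq k; exact_mod_cast this
  rw [div_le_iff₀ hq0]
  rw [mul_comm, ← mul_assoc]
  have hpk : (0:ℝ) < Real.sqrt 2 ^ k := by positivity
  have : (1:ℝ) = ((Real.sqrt 2)⁻¹)^k * Real.sqrt 2 ^ k := by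
    rw [← mul_pow]
    simp [inv_mul_cancel₀ (ne_of_gt hs0)]
  rw [this]
  calc (Real.sqrt 2)⁻¹ ^ k * Real.sqrt 2 ^ k
      ≤ (Real.sqrt 2)⁻¹ ^ k * (Real.sqrt 2 * (q k:ℝ)) :=
        mul_le_mul_of_nonneg_left hg (by positivity)
    _ = (q k:ℝ) * Real.sqrt 2 * (Real.sqrt 2)⁻¹ ^ k := by ring

lemma cf_tendsto : Filter.Tendsto q Filter.atTop Filter.atTop := by
  have hstep : ∀ k, q k + 1 ≤ q (k+2) := by
    intro k
    have h1 := cf_rec θ hθ q hq k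
    have h2 := cf_one_le θ hθ q hq (k+1)
    omega
  have hmono : Monotone q := monotone_nat_of_le_succ (cf_mono θ hθ q hq)
  have hdbl : ∀ j, j ≤ q (2*j) := by
    intro j
    induction j with
    | zero => omega
    | succ j ih =>
      have := hstep (2*j)
      have h2 : q (2*j) + 1 ≤ q (2*j+2) := this
      have h3 : 2*(j+1) = 2*j+2 := by ring
      rw [h3]
      omega
  apply Filter.tendsto_atTop_atTop.mpr
  intro b
  refine ⟨2*b, fun k hk => ?_⟩
  calc b ≤ q (2*b) := hdbl b
    _ ≤ q k := hmono hk
end CF4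

lemma summable_of_eventually_le {f g : ℕ → ℝ}
    (h : ∀ᶠ k in Filter.atTop, 0 ≤ f k ∧ f k ≤ g k) (hg : Summable g) : Summable f := by
  obtain ⟨K, hK⟩ := Filter.eventually_atTop.mp h
  rw [← summable_nat_add_iff K]
  exact Summable.of_nonneg_of_le (fun k => (hK (k+K) (by omega)).1)
    (fun k => (hK (k+K) (by omega)).2) ((summable_nat_add_iff K).mpr hg)

theorem khintchine_sequence_condition_equivalence
    (θ : ℝ) (hθ : Irrational θ) (q : ℕ → ℕ)
    (hq : ∀ k, (q k : ℝ) = (GenContFract.of θ).dens k)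
    (φ : ℕ → ℝ) (hφpos : ∀ n, 0 < φ n) (hφmono : ∀ m n, m ≤ n → φ m ≤ φ n)
    (hφtop : Tendsto φ atTop atTop) :
    (¬ Summable fun k =>
        ∑ n ∈ Finset.Ico (q k) (q (k + 1)),
          min (1 / ((n : ℝ) * φ n)) (distNearestInt ((q k : ℝ) * θ))) ↔
      ¬ Summable fun k =>
        Real.log (min (φ (q k)) ((q (k + 1) : ℝ) / (q k : ℝ))) / φ (q k) := by
  refine not_congr ?_
  have hq1 := cf_one_le θ hθ q hq
  have hqmono := cf_mono θ hθ q hq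
  have hqrec := cf_rec θ hθ q hq
  have hub := cf_dist_ub θ hθ q hq
  have hlb := cf_dist_lb θ hθ q hq
  have hqsum := cf_summable_inv θ hθ q hq
  have hqt := cf_tendsto θ hθ q hq
  set A : ℕ → ℝ := fun k => ∑ n ∈ Finset.Ico (q k) (q (k + 1)),
      min (1 / ((n : ℝ) * φ n)) (distNearestInt ((q k : ℝ) * θ)) with hA
  set B : ℕ → ℝ := fun k =>
      Real.log (min (φ (q k)) ((q (k + 1) : ℝ) / (q k : ℝ))) / φ (q k) with hB
  have hφq : Tendsto (fun k => φ (q k)) atTop atTop := hφtop.comp hqt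
  obtain ⟨K₀, hK₀⟩ := Filter.eventually_atTop.mp (hφq.eventually_ge_atTop 4)
  set K := max K₀ 1 with hKdef
  have hKprop : ∀ k, K ≤ k → 4 ≤ φ (q k) ∧ 1 ≤ k := fun k hk =>
    ⟨hK₀ k (le_trans (le_max_left _ _) hk), le_trans (le_max_right _ _) hk⟩
  have h2q : ∀ k, 1 ≤ k → 2 ≤ q (k+1) := by
    intro k hk
    obtain ⟨j, rfl⟩ : ∃ j, k = j+1 := ⟨k-1, by omega⟩
    have h1 := hqrec j
    have h2 := hq1 j
    have h3 := hq1 (j+1)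
    have he : j+1+1 = j+2 := by omega
    rw [he]
    omega
  have hlt : ∀ k, 1 ≤ k → q k < q (k+1) := by
    intro k hk
    obtain ⟨j, rfl⟩ : ∃ j, k = j+1 := ⟨k-1, by omega⟩
    have h1 := hqrec j
    have h2 := hq1 j
    have he : j+1+1 = j+2 := by omega
    rw [he]
    omega
  have hq0R : ∀ k, (0:ℝ) < q k := fun k => by
    have := hq1 k
    exact_mod_cast this
  have hA0 : ∀ k, 0 ≤ A k := by
    intro k
    rw [hA]
    apply Finset.sum_nonneg
    intro n hn
    rw [Finset.mem_Ico] at hn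
    have hn0 : (0:ℝ) < n := by
      have : 1 ≤ n := le_trans (hq1 k) hn.1
      exact_mod_cast this
    have hφn := hφpos n
    exact le_min (by positivity) (abs_nonneg _)
  constructor
  · -- Summable A → Summable B
    intro hA'
    set jump : ℕ → ℝ := fun k =>
      if 2 * φ (q k) ≤ φ (q (k+1)) then Real.log (φ (q k)) / φ (q k) else 0 with hjdef
    have hqmono' : Monotone q := monotone_nat_of_le_succ hqmono
    have hjump : Summable jump := by
      rw [← summable_nat_add_iff K]
      have hj := jump_summable (fun k => φ (q (k+K)))
        (fun a b hab => hφmono _ _ (hqmono' (by omega : a+K ≤ b+K)))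
        (fun k => (hKprop (k+K) (by omega)).1)
      apply hj.congr
      intro k
      rw [hjdef]
      simp only
      rw [show k+1+K = k+K+1 from by omega]
    apply summable_of_eventually_le ?_ ((hA'.mul_left 8).add hjump)
    refine Filter.eventually_atTop.mpr ⟨K, fun k hk => ?_⟩
    obtain ⟨hφ4, hk1⟩ := hKprop k hk
    have hRk : (1:ℝ) ≤ (q (k+1):ℝ)/(q k:ℝ) := by
      rw [le_div_iff₀ (hq0R k)]
      have : (q k:ℝ) ≤ q (k+1) := by exact_mod_cast hqmono k
      linarith
    have hminpos : (0:ℝ) < min (φ (q k)) ((q (k+1):ℝ)/(q k:ℝ)) :=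
      lt_min (hφpos _) (by linarith)
    have hmin1 : (1:ℝ) ≤ min (φ (q k)) ((q (k+1):ℝ)/(q k:ℝ)) := le_min (by linarith) hRk
    have hBkeq : B k = Real.log (min (φ (q k)) ((q (k+1):ℝ)/(q k:ℝ))) / φ (q k) := by
      rw [hB]
    refine ⟨by rw [hBkeq]; exact div_nonneg (Real.log_nonneg hmin1) (hφpos _).le, ?_⟩
    by_cases hcase : 2 * φ (q k) ≤ φ (q (k+1))
    · have hjk : jump k = Real.log (φ (q k)) / φ (q k) := by
        rw [hjdef]; simp only; rw [if_pos hcase]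
      have hlogle : Real.log (min (φ (q k)) ((q (k+1):ℝ)/(q k:ℝ))) ≤ Real.log (φ (q k)) :=
        Real.log_le_log hminpos (min_le_left _ _)
      have hBk : B k ≤ Real.log (φ (q k)) / φ (q k) := by
        rw [hBkeq]
        gcongr
      have h8A : 0 ≤ 8 * A k := by
        have := hA0 k
        linarith
      show B k ≤ 8 * A k + jump k
      rw [hjk]
      linarith
    · have hjk : jump k = 0 := by
        rw [hjdef]; simp only; rw [if_neg hcase]
      push_neg at hcase
      set G := φ (q (k+1)) with hGdef
      set R := (q (k+1):ℝ)/(q k:ℝ) with hRdef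
      have hG4 : (4:ℝ) ≤ G := le_trans hφ4 (hφmono _ _ (hqmono k))
      have hG0 : (0:ℝ) < G := by linarith
      have hblock := block_lower φ hφpos (q k) (q (k+1)) G (distNearestInt ((q k:ℝ)*θ))
        (hq1 k) (hlt k hk1) hG4 (fun n hn => hφmono _ _ hn.le) (hlb k (h2q k hk1))
      have hx0 : 0 ≤ Real.log (min G R) := Real.log_nonneg (le_min (by linarith) hRk)
      have hmm : min (φ (q k)) R ≤ min G R := min_le_min (hφmono _ _ (hqmono k)) le_rfl
      have hlogm : Real.log (min (φ (q k)) R) ≤ Real.log (min G R) :=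
        Real.log_le_log hminpos hmm
      have hstep1 : B k ≤ Real.log (min G R) / φ (q k) := by
        rw [hBkeq]
        gcongr
      have hstep2 : Real.log (min G R) / φ (q k) ≤ 2 * Real.log (min G R) / G := by
        rw [div_le_div_iff₀ (hφpos _) hG0]
        nlinarith
      have hstep3 : 2 * Real.log (min G R) / G = 8 * (Real.log (min G R)/(4*G)) := by
        field_simp
        ring
      have hfin : B k ≤ 8 * A k := by
        calc B k ≤ 2 * Real.log (min G R)/G := le_trans hstep1 hstep2
          _ = 8 * (Real.log (min G R)/(4*G)) := hstep3
          _ ≤ 8 * A k := by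
              have := hblock
              linarith
      show B k ≤ 8 * A k + jump k
      rw [hjk]
      linarith
  · -- Summable B → Summable A
    intro hB'
    apply summable_of_eventually_le ?_ ((hB'.mul_left 2).add (hqsum.mul_left 2))
    refine Filter.eventually_atTop.mpr ⟨K, fun k hk => ?_⟩
    obtain ⟨hφ4, hk1⟩ := hKprop k hk
    refine ⟨hA0 k, ?_⟩
    have hblock := block_upper φ hφpos (q k) (q (k+1)) (φ (q k)) (distNearestInt ((q k:ℝ)*θ))
      (hq1 k) (hqmono k) hφ4 (fun n hn => hφmono _ _ hn) (abs_nonneg _) (hub k)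
    have hAkeq : A k = ∑ n ∈ Finset.Ico (q k) (q (k + 1)),
        min (1 / ((n : ℝ) * φ n)) (distNearestInt ((q k : ℝ) * θ)) := by rw [hA]
    have hBkeq : B k = Real.log (min (φ (q k)) ((q (k+1):ℝ)/(q k:ℝ))) / φ (q k) := by
      rw [hB]
    have h2eq : 2/(q k:ℝ) = 2 * (1/(q k:ℝ)) := by ring
    show A k ≤ 2 * B k + 2 * (1/(q k:ℝ))
    rw [hAkeq, hBkeq]
    rw [← h2eq]
    exact hblock
end

section
/- Let φ be positive non-decreasing and θ irrational with convergent denominators q_k. Define Λ = {k ≥ 1 : φ(q_{k+1}) ≤ 2φ(q_k)}. Then ∑_{k∉Λ} log(min(φ(q_k), q_{k+1}/q_k))/φ(q_k) ≤ ∑_{k∉Λ} log(φ(q_k))/φ(q_k) < ∞, and consequently ∑_{k≥0} log(min(φ(q_k),q_{k+1}/q_k))/φ(q_{k+1}) = ∞ if and only if ∑_{k≥0} log(min(φ(q_k),q_{k+1}/q_k))/φ(q_k) = ∞. -/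
open MeasureTheory Filter Real
open scoped ENNReal Classical

/-- Geometric-decay finset sum bound. -/
lemma geom_finset_bound (g : ℕ → ℝ) (hgpos : ∀ k, 0 < g k) (hgmono : Monotone g)
    (S : Set ℕ) (hS : ∀ k ∈ S, 2 * g k ≤ g (k + 1)) :
    ∀ n : ℕ, ∀ T : Finset ℕ, T.card = n → (∀ k ∈ T, k ∈ S) → ∀ m : ℕ, (∀ k ∈ T, m ≤ k) →
      ∑ k ∈ T, (Real.sqrt (g k))⁻¹ ≤
        (1 - (Real.sqrt 2)⁻¹)⁻¹ * (Real.sqrt (g m))⁻¹ := by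
  have h2 : (1 : ℝ) < Real.sqrt 2 := by
    rw [show (1 : ℝ) = Real.sqrt 1 by simp]
    exact Real.sqrt_lt_sqrt (by norm_num) (by norm_num)
  have h2pos : (0 : ℝ) < Real.sqrt 2 := by linarith
  have hs1 : (Real.sqrt 2)⁻¹ < 1 := by
    rw [inv_lt_one_iff₀]; right; exact h2
  have hspos : (0 : ℝ) < (Real.sqrt 2)⁻¹ := by positivity
  have hC : (0 : ℝ) < (1 - (Real.sqrt 2)⁻¹)⁻¹ := by
    apply inv_pos.mpr; linarith
  intro n
  induction n with
  | zero =>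
    intro T hT _ m _
    rw [Finset.card_eq_zero] at hT
    subst hT
    simp only [Finset.sum_empty]
    positivity
  | succ n ih =>
    intro T hT hTS m hTm
    have hne : T.Nonempty := by
      rw [← Finset.card_pos, hT]; exact Nat.succ_pos n
    set a := T.min' hne with ha
    have haT : a ∈ T := T.min'_mem hne
    have hrec : ∑ k ∈ T.erase a, (Real.sqrt (g k))⁻¹ + (Real.sqrt (g a))⁻¹
        = ∑ k ∈ T, (Real.sqrt (g k))⁻¹ := Finset.sum_erase_add T _ haT
    have hcard : (T.erase a).card = n := by
      rw [Finset.card_erase_of_mem haT, hT]; rfl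
    have herase : ∀ k ∈ T.erase a, a + 1 ≤ k := by
      intro k hk
      have hk1 : k ∈ T := Finset.mem_of_mem_erase hk
      have hk2 : k ≠ a := Finset.ne_of_mem_erase hk
      have := T.min'_le k hk1
      omega
    have hih := ih (T.erase a) hcard (fun k hk => hTS k (Finset.mem_of_mem_erase hk))
      (a + 1) herase
    have hga : 0 < g a := hgpos a
    have hsga : 0 < Real.sqrt (g a) := Real.sqrt_pos.mpr hga
    have hstep : 2 * g a ≤ g (a + 1) := hS a (hTS a haT)
    have hsqrt_step : Real.sqrt 2 * Real.sqrt (g a) ≤ Real.sqrt (g (a + 1)) := by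
      rw [← Real.sqrt_mul (by norm_num : (0:ℝ) ≤ 2)]
      exact Real.sqrt_le_sqrt hstep
    have hinv_step : (Real.sqrt (g (a + 1)))⁻¹ ≤ (Real.sqrt 2)⁻¹ * (Real.sqrt (g a))⁻¹ := by
      rw [← mul_inv]
      apply inv_anti₀ (by positivity) hsqrt_step
    have hma : m ≤ a := hTm a haT
    have hinv_ma : (Real.sqrt (g a))⁻¹ ≤ (Real.sqrt (g m))⁻¹ := by
      apply inv_anti₀ (Real.sqrt_pos.mpr (hgpos m))
      exact Real.sqrt_le_sqrt (hgmono hma)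
    have hCid : 1 + (1 - (Real.sqrt 2)⁻¹)⁻¹ * (Real.sqrt 2)⁻¹ = (1 - (Real.sqrt 2)⁻¹)⁻¹ := by
      have hne0 : 1 - (Real.sqrt 2)⁻¹ ≠ 0 := by linarith
      have h := inv_mul_cancel₀ hne0
      ring_nf at h ⊢
      linarith
    calc ∑ k ∈ T, (Real.sqrt (g k))⁻¹
        = ∑ k ∈ T.erase a, (Real.sqrt (g k))⁻¹ + (Real.sqrt (g a))⁻¹ := hrec.symm
      _ ≤ (1 - (Real.sqrt 2)⁻¹)⁻¹ * (Real.sqrt (g (a + 1)))⁻¹ + (Real.sqrt (g a))⁻¹ := by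
          linarith [hih]
      _ ≤ (1 - (Real.sqrt 2)⁻¹)⁻¹ * ((Real.sqrt 2)⁻¹ * (Real.sqrt (g a))⁻¹)
            + (Real.sqrt (g a))⁻¹ := by
          have := mul_le_mul_of_nonneg_left hinv_step hC.le
          linarith
      _ = (1 + (1 - (Real.sqrt 2)⁻¹)⁻¹ * (Real.sqrt 2)⁻¹) * (Real.sqrt (g a))⁻¹ := by ring
      _ = (1 - (Real.sqrt 2)⁻¹)⁻¹ * (Real.sqrt (g a))⁻¹ := by rw [hCid]
      _ ≤ (1 - (Real.sqrt 2)⁻¹)⁻¹ * (Real.sqrt (g m))⁻¹ := by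
          exact mul_le_mul_of_nonneg_left hinv_ma hC.le

/-- Summability from an eventual norm bound. -/
lemma summable_of_eventually_norm_le {f g : ℕ → ℝ} (N : ℕ) (hg : Summable g)
    (h : ∀ k, N ≤ k → ‖f k‖ ≤ g k) : Summable f := by
  rw [← summable_nat_add_iff N]
  exact Summable.of_norm_bounded ((summable_nat_add_iff N).2 hg)
    (fun k => h (k + N) (Nat.le_add_left N k))

/-- Elementary bound: `log x / x ≤ 2 / √x` for `x ≥ 1`. -/
lemma log_div_le_two_inv_sqrt {x : ℝ} (hx : 1 ≤ x) :
    Real.log x / x ≤ 2 * (Real.sqrt x)⁻¹ := by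
  have hx0 : 0 < x := by linarith
  have hs : 0 < Real.sqrt x := Real.sqrt_pos.mpr hx0
  have hlog : Real.log x ≤ 2 * Real.sqrt x := by
    have h1 : Real.log (Real.sqrt x) = Real.log x / 2 := Real.log_sqrt hx0.le
    have h2 : Real.log (Real.sqrt x) ≤ Real.sqrt x - 1 := Real.log_le_sub_one_of_pos hs
    linarith
  have hxs : Real.sqrt x * Real.sqrt x = x := Real.mul_self_sqrt hx0.le
  calc Real.log x / x ≤ 2 * Real.sqrt x / x := by gcongr
    _ = 2 * (Real.sqrt x)⁻¹ := by
        rw [← hxs]; field_simp; rw [Real.sqrt_sq hs.le]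

theorem lambda_complement_summable_and_equivalence
    (θ : ℝ) (hθ : Irrational θ) (q : ℕ → ℕ)
    (hq : ∀ k, (q k : ℝ) = (GenContFract.of θ).dens k)
    (φ : ℕ → ℝ) (hφpos : ∀ n, 0 < φ n) (hφmono : ∀ m n, m ≤ n → φ m ≤ φ n)
    (hφtop : Tendsto φ atTop atTop) :
    (∀ k : ℕ, k ∉ {k : ℕ | 1 ≤ k ∧ φ (q (k + 1)) ≤ 2 * φ (q k)} →
      Real.log (min (φ (q k)) ((q (k + 1) : ℝ) / (q k : ℝ))) / φ (q k) ≤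
        Real.log (φ (q k)) / φ (q k)) ∧
    Summable (({k : ℕ | 1 ≤ k ∧ φ (q (k + 1)) ≤ 2 * φ (q k)}ᶜ).indicator
      (fun k => Real.log (φ (q k)) / φ (q k))) ∧
    ((¬ Summable fun k =>
        Real.log (min (φ (q k)) ((q (k + 1) : ℝ) / (q k : ℝ))) / φ (q (k + 1))) ↔
      ¬ Summable fun k =>
        Real.log (min (φ (q k)) ((q (k + 1) : ℝ) / (q k : ℝ))) / φ (q k)) := by
  classical
  set Λ : Set ℕ := {k : ℕ | 1 ≤ k ∧ φ (q (k + 1)) ≤ 2 * φ (q k)} with hΛdef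
  set G : ℕ → ℝ := fun k => φ (q k) with hGdef
  -- basic continued fraction facts
  have hterm : ∀ n, ¬ (GenContFract.of θ).TerminatedAt n := by
    intro n h
    obtain ⟨r, hr⟩ := GenContFract.exists_rat_eq_of_terminates ⟨n, h⟩
    exact hθ ⟨r, hr.symm⟩
  have hfib : ∀ k, (Nat.fib (k + 1) : ℝ) ≤ (q k : ℝ) := by
    intro k
    rw [hq]
    exact GenContFract.succ_nth_fib_le_of_nth_den (Or.inr (hterm _))
  have hfibN : ∀ k, Nat.fib (k + 1) ≤ q k := by
    intro k; exact_mod_cast hfib k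
  have hq1 : ∀ k, 1 ≤ q k := by
    intro k
    have := hfibN k
    have h2 : 0 < Nat.fib (k + 1) := Nat.fib_pos.mpr k.succ_pos
    omega
  have hqpos : ∀ k, (0 : ℝ) < (q k : ℝ) := by
    intro k; exact_mod_cast Nat.lt_of_lt_of_le Nat.zero_lt_one (hq1 k)
  have hqmono : ∀ k, q k ≤ q (k + 1) := by
    intro k
    have : (q k : ℝ) ≤ (q (k + 1) : ℝ) := by
      rw [hq, hq]; exact GenContFract.of_den_mono
    exact_mod_cast this
  have hqMono : Monotone q := monotone_nat_of_le_succ hqmono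
  have hGpos : ∀ k, 0 < G k := fun k => hφpos (q k)
  have hGmono : Monotone G := fun a b h => hφmono _ _ (hqMono h)
  have hr1 : ∀ k, (1 : ℝ) ≤ (q (k + 1) : ℝ) / (q k : ℝ) := by
    intro k
    rw [le_div_iff₀ (hqpos k), one_mul]
    exact_mod_cast hqmono k
  have hmin_pos : ∀ k, 0 < min (G k) ((q (k + 1) : ℝ) / (q k : ℝ)) := by
    intro k
    exact lt_min (hGpos k) (lt_of_lt_of_le one_pos (hr1 k))
  -- G tends to infinity
  have hfibge : ∀ n : ℕ, n ≤ Nat.fib (n + 2) := by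
    intro n
    induction n with
    | zero => simp
    | succ n ih =>
      have h1 : 0 < Nat.fib (n + 2) := Nat.fib_pos.mpr (Nat.succ_pos _)
      have h2 : Nat.fib (n + 1 + 2) = Nat.fib (n + 1) + Nat.fib (n + 2) := Nat.fib_add_two
      have h3 : 0 < Nat.fib (n + 1) := Nat.fib_pos.mpr (Nat.succ_pos _)
      omega
  have hqtop : Tendsto q atTop atTop := by
    rw [tendsto_atTop]
    intro b
    filter_upwards [eventually_ge_atTop (b + 1)] with k hk
    have h1 : Nat.fib (k + 1) ≤ q k := hfibN k
    have h2 : k - 1 ≤ Nat.fib (k - 1 + 2) := hfibge (k - 1)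
    have h3 : k - 1 + 2 = k + 1 := by omega
    rw [h3] at h2
    omega
  have hGtop : Tendsto G atTop atTop := hφtop.comp hqtop
  obtain ⟨N₀, hN₀⟩ := (tendsto_atTop.mp hGtop 1).exists_forall_of_atTop
  -- pick N with: for all k ≥ N, 1 ≤ G k, and 1 ≤ N
  have hGev : ∀ᶠ k in atTop, 1 ≤ G k := hGtop.eventually_ge_atTop 1
  obtain ⟨N₁, hN₁⟩ := eventually_atTop.mp hGev
  set N : ℕ := max N₁ 1 with hNdef
  have hN : ∀ k, N ≤ k → 1 ≤ G k := fun k hk => hN₁ k (le_trans (le_max_left _ _) hk)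
  have hN1 : 1 ≤ N := le_max_right _ _
  -- notation for the main quantities
  set a : ℕ → ℝ := fun k => Real.log (min (G k) ((q (k + 1) : ℝ) / (q k : ℝ))) with hadef
  have ha_nonneg : ∀ k, N ≤ k → 0 ≤ a k := by
    intro k hk
    exact Real.log_nonneg (le_min (hN k hk) (hr1 k))
  have ha_le : ∀ k, a k ≤ Real.log (G k) := by
    intro k
    exact Real.log_le_log (hmin_pos k) (min_le_left _ _)
  -- Part 1
  have part1 : ∀ k : ℕ, k ∉ Λ →
      Real.log (min (φ (q k)) ((q (k + 1) : ℝ) / (q k : ℝ))) / φ (q k) ≤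
        Real.log (φ (q k)) / φ (q k) := by
    intro k _
    exact div_le_div_of_nonneg_right (ha_le k) (hGpos k).le
  -- Part 2 : summability over Λᶜ
  set C : ℝ := (1 - (Real.sqrt 2)⁻¹)⁻¹ with hCdef
  set b : ℕ → ℝ := fun k => if k ∈ Λᶜ ∧ N ≤ k then 2 * (Real.sqrt (G k))⁻¹ else 0 with hbdef
  have hb_nonneg : ∀ k, 0 ≤ b k := by
    intro k
    simp only [hbdef]
    split
    · positivity
    · exact le_refl 0
  have hSstep : ∀ k ∈ {k : ℕ | k ∈ Λᶜ ∧ N ≤ k}, 2 * G k ≤ G (k + 1) := by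
    intro k hk
    obtain ⟨hkc, hkN⟩ := hk
    have hk1 : 1 ≤ k := le_trans hN1 hkN
    have : ¬ (1 ≤ k ∧ φ (q (k + 1)) ≤ 2 * φ (q k)) := hkc
    push_neg at this
    exact le_of_lt (by simpa [hGdef, mul_comm] using this hk1)
  have hb_sum : Summable b := by
    apply summable_of_sum_range_le (c := 2 * (C * (Real.sqrt (G N))⁻¹)) hb_nonneg
    intro n
    have hsum : ∑ k ∈ Finset.range n, b k
        = ∑ k ∈ (Finset.range n).filter (fun k => k ∈ Λᶜ ∧ N ≤ k),
            2 * (Real.sqrt (G k))⁻¹ := by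
      rw [Finset.sum_filter]
    rw [hsum, ← Finset.mul_sum]
    have hbound := geom_finset_bound G hGpos hGmono {k : ℕ | k ∈ Λᶜ ∧ N ≤ k} hSstep
      ((Finset.range n).filter (fun k => k ∈ Λᶜ ∧ N ≤ k)).card
      ((Finset.range n).filter (fun k => k ∈ Λᶜ ∧ N ≤ k)) rfl
      (by intro k hk; exact (Finset.mem_filter.mp hk).2)
      N (by intro k hk; exact (Finset.mem_filter.mp hk).2.2)
    exact mul_le_mul_of_nonneg_left hbound (by norm_num)
  have part2 : Summable (Λᶜ.indicator (fun k => Real.log (G k) / G k)) := by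
    apply summable_of_eventually_norm_le N hb_sum
    intro k hk
    by_cases hkc : k ∈ Λᶜ
    · rw [Set.indicator_of_mem hkc]
      have h1 : 1 ≤ G k := hN k hk
      have h2 : 0 ≤ Real.log (G k) / G k := by
        apply div_nonneg (Real.log_nonneg h1) (hGpos k).le
      rw [Real.norm_eq_abs, abs_of_nonneg h2]
      have h3 : Real.log (G k) / G k ≤ 2 * (Real.sqrt (G k))⁻¹ :=
        log_div_le_two_inv_sqrt h1
      have hbk : b k = 2 * (Real.sqrt (G k))⁻¹ := by
        simp only [hbdef]
        exact if_pos ⟨hkc, hk⟩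
      rw [hbk]; exact h3
    · rw [Set.indicator_of_notMem hkc]
      simpa using hb_nonneg k
  -- Part 3 : the iff
  have part3 : (¬ Summable fun k => a k / G (k + 1)) ↔ ¬ Summable fun k => a k / G k := by
    have dir1 : (Summable fun k => a k / G k) → Summable fun k => a k / G (k + 1) := by
      intro hv
      apply summable_of_eventually_norm_le N hv
      intro k hk
      have h0 : 0 ≤ a k := ha_nonneg k hk
      have h1 : 0 ≤ a k / G (k + 1) := div_nonneg h0 (hGpos (k + 1)).le
      rw [Real.norm_eq_abs, abs_of_nonneg h1]
      exact div_le_div_of_nonneg_left h0 (hGpos k) (hGmono (Nat.le_succ k))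
    have dir2 : (Summable fun k => a k / G (k + 1)) → Summable fun k => a k / G k := by
      intro hu
      have h1 : Summable (Λ.indicator (fun k => a k / G k)) := by
        apply summable_of_eventually_norm_le N (hu.mul_left 2)
        intro k hk
        have h0 : 0 ≤ a k := ha_nonneg k hk
        by_cases hkΛ : k ∈ Λ
        · rw [Set.indicator_of_mem hkΛ]
          have hle : φ (q (k + 1)) ≤ 2 * φ (q k) := hkΛ.2
          have hv0 : 0 ≤ a k / G k := div_nonneg h0 (hGpos k).le
          rw [Real.norm_eq_abs, abs_of_nonneg hv0]
          have h2 : 0 < G (k + 1) := hGpos (k + 1)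
          rw [show (2 : ℝ) * (a k / G (k + 1)) = (2 * a k) / G (k + 1) by ring,
            div_le_div_iff₀ (hGpos k) h2]
          have hle' : G (k + 1) ≤ 2 * G k := hle
          nlinarith
        · rw [Set.indicator_of_notMem hkΛ]
          simp only [norm_zero]
          exact mul_nonneg (by norm_num) (div_nonneg (ha_nonneg k hk) (hGpos (k + 1)).le)
      have h2 : Summable (Λᶜ.indicator (fun k => a k / G k)) := by
        apply summable_of_eventually_norm_le N part2
        intro k hk
        by_cases hkc : k ∈ Λᶜ
        · rw [Set.indicator_of_mem hkc, Set.indicator_of_mem hkc]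
          have h0 : 0 ≤ a k := ha_nonneg k hk
          have hv0 : 0 ≤ a k / G k := div_nonneg h0 (hGpos k).le
          rw [Real.norm_eq_abs, abs_of_nonneg hv0]
          exact div_le_div_of_nonneg_right (ha_le k) (hGpos k).le
        · rw [Set.indicator_of_notMem hkc, Set.indicator_of_notMem hkc]
          simp
      refine (h1.add h2).congr fun k => ?_
      exact Set.indicator_self_add_compl_apply Λ _ k
    exact ⟨fun h h' => h (dir1 h'), fun h h' => h (dir2 h')⟩
  refine ⟨part1, part2, ?_⟩
  exact part3
end
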